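/- arXiv:2010.14260 — 4 statements merged into one kernel-verified Lean document; each statement's English description precedes it below -/
import Mathlib

section
/- Let σ, σ' be two independent random permutations distributed according to the Mallows model M(σ_0, θ). Then (1/2)·E[d(σ, σ')] ≤ E[d(σ, σ_0)] ≤ E[d(σ, σ')]. -/
open Finset

/-- Kendall's-τ distance: number of pairs `i < j` on which `σ` and `π` disagree in
relative order. -/
def kendall (n : ℕ) (σ π : Equiv.Perm (Fin n)) : ℕ :=
  (Finset.univ.filter (fun p : Fin n × Fin n =>
    p.1 < p.2 ∧ ((σ p.1 < σ p.2 ∧ π p.2 < π p.1) ∨ (σ p.2 < σ p.1 ∧ π p.1 < π p.2)))).card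

/-- Inversion vector coordinate (0-indexed `j`): `V_j(σ) = #{i > j : σ(i) < σ(j)}`. -/
def invVec (n : ℕ) (σ : Equiv.Perm (Fin n)) (j : Fin n) : ℕ :=
  (Finset.univ.filter (fun i : Fin n => j < i ∧ σ i < σ j)).card

/-- `ψ_{n,j} = (1 - exp(-θ(n-j+1)))/(1 - exp(-θ))`, with 1-indexed `j`. -/
noncomputable def psiFac (n : ℕ) (θ : ℝ) (j : ℕ) : ℝ :=
  (1 - Real.exp (-θ * ((n : ℝ) - j + 1))) / (1 - Real.exp (-θ))

/-- `ψ_n = ∏_{j=1}^{n-1} ψ_{n,j}`. -/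
noncomputable def psiProd (n : ℕ) (θ : ℝ) : ℝ :=
  ∏ j ∈ Finset.range (n - 1), psiFac n θ (j + 1)

/-- Mallows probability mass function with center `σ₀` and dispersion `θ`. -/
noncomputable def mallows (n : ℕ) (θ : ℝ) (σ₀ σ : Equiv.Perm (Fin n)) : ℝ :=
  Real.exp (-θ * kendall n σ σ₀) / ∑ π : Equiv.Perm (Fin n), Real.exp (-θ * kendall n π σ₀)

namespace MallowsAux

variable {n : ℕ}

def dg (σ π : Equiv.Perm (Fin n)) (i j : Fin n) : Prop :=
  (σ i < σ j ∧ π j < π i) ∨ (σ j < σ i ∧ π i < π j)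

instance (σ π : Equiv.Perm (Fin n)) (i j : Fin n) : Decidable (dg σ π i j) := by
  unfold dg; infer_instance

lemma dg_symm (σ π : Equiv.Perm (Fin n)) (i j : Fin n) : dg σ π i j ↔ dg σ π j i := by
  unfold dg; tauto

lemma dg_irrefl (σ π : Equiv.Perm (Fin n)) (i : Fin n) : ¬ dg σ π i i := by
  simp [dg]

lemma kendall_eq (σ π : Equiv.Perm (Fin n)) :
    kendall n σ π = ∑ p : Fin n × Fin n, if p.1 < p.2 ∧ dg σ π p.1 p.2 then 1 else 0 := by
  rw [kendall, Finset.card_filter]; rfl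

lemma double_eq (σ π : Equiv.Perm (Fin n)) :
    (∑ i : Fin n, ∑ j : Fin n, if dg σ π i j then 1 else 0) = 2 * kendall n σ π := by
  have pt : ∀ i j : Fin n, (if dg σ π i j then (1:ℕ) else 0)
      = (if i < j ∧ dg σ π i j then 1 else 0) + (if j < i ∧ dg σ π i j then 1 else 0) := by
    intro i j
    rcases lt_trichotomy i j with h | h | h
    · simp [h, asymm h]
    · subst h; simp [dg_irrefl]
    · simp [h, asymm h]
  have h2 : (∑ i : Fin n, ∑ j : Fin n, if j < i ∧ dg σ π i j then (1:ℕ) else 0)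
      = ∑ i : Fin n, ∑ j : Fin n, if i < j ∧ dg σ π i j then 1 else 0 := by
    rw [Finset.sum_comm]
    refine Finset.sum_congr rfl fun i _ => Finset.sum_congr rfl fun j _ => ?_
    exact if_congr (and_congr_right fun _ => dg_symm σ π j i) rfl rfl
  simp_rw [pt, Finset.sum_add_distrib, h2, kendall_eq, Fintype.sum_prod_type]
  omega

def Tp (σ : Equiv.Perm (Fin n)) (a b : Fin n) : Equiv.Perm (Fin n) :=
  Equiv.swap (σ a) (σ b) * σ

lemma Tp_a (σ : Equiv.Perm (Fin n)) (a b : Fin n) : Tp σ a b a = σ b := by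
  simp [Tp, Equiv.Perm.mul_apply]

lemma Tp_b (σ : Equiv.Perm (Fin n)) (a b : Fin n) : Tp σ a b b = σ a := by
  simp [Tp, Equiv.Perm.mul_apply]

lemma Tp_other (σ : Equiv.Perm (Fin n)) {a b c : Fin n} (h1 : c ≠ a) (h2 : c ≠ b) :
    Tp σ a b c = σ c := by
  simp only [Tp, Equiv.Perm.mul_apply]
  exact Equiv.swap_apply_of_ne_of_ne (fun h => h1 (σ.injective h)) (fun h => h2 (σ.injective h))

lemma Tp_retract (σ : Equiv.Perm (Fin n)) (a b : Fin n) :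
    Equiv.swap (Tp σ a b b) (Tp σ a b a) * Tp σ a b = σ := by
  rw [Tp_a, Tp_b, Tp, ← mul_assoc, Equiv.swap_mul_self, one_mul]

lemma hval_of_dg {σ₀ σ : Equiv.Perm (Fin n)} {a b : Fin n} (hdg : dg σ σ₀ a b) :
    ((σ a).val < (σ b).val ∧ (σ₀ b).val < (σ₀ a).val) ∨
      ((σ b).val < (σ a).val ∧ (σ₀ a).val < (σ₀ b).val) := by
  simp only [dg, Fin.lt_def] at hdg
  exact hdg

lemma dg_Tab_false {σ₀ σ : Equiv.Perm (Fin n)} {a b : Fin n} (hdg : dg σ σ₀ a b) :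
    ¬ dg (Tp σ a b) σ₀ a b := by
  have hval := hval_of_dg hdg
  simp only [dg, Fin.lt_def, Tp_a, Tp_b]
  omega

lemma dg_Tba_false {σ₀ σ : Equiv.Perm (Fin n)} {a b : Fin n} (hdg : dg σ σ₀ a b) :
    ¬ dg (Tp σ a b) σ₀ b a := by
  have hval := hval_of_dg hdg
  simp only [dg, Fin.lt_def, Tp_a, Tp_b]
  omega

lemma key3' (σ₀ σ : Equiv.Perm (Fin n)) {a b j : Fin n} (hja : j ≠ a) (hjb : j ≠ b)
    (hdg : dg σ σ₀ a b) :
    ((if dg (Tp σ a b) σ₀ a j then 1 else 0) + (if dg (Tp σ a b) σ₀ b j then 1 else 0) : ℕ)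
      ≤ (if dg σ σ₀ a j then 1 else 0) + (if dg σ σ₀ b j then 1 else 0) := by
  have hval := hval_of_dg hdg
  simp only [dg, Fin.lt_def, Tp_a, Tp_b, Tp_other σ hja hjb]
  split_ifs <;> omega

lemma split2 {a b : Fin n} (hab : a ≠ b) (g : Fin n → ℕ) :
    ∑ i : Fin n, g i = g a + g b + ∑ i ∈ univ \ {a, b}, g i := by
  rw [← Finset.sum_sdiff (Finset.subset_univ ({a, b} : Finset (Fin n))),
    Finset.sum_pair hab]
  ring

lemma expand (σ₀ τ : Equiv.Perm (Fin n)) {a b : Fin n} (hab : a ≠ b) :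
    (∑ i : Fin n, ∑ j : Fin n, if dg τ σ₀ i j then 1 else 0)
    = ((if dg τ σ₀ a a then 1 else 0) + (if dg τ σ₀ a b then 1 else 0)
        + ((if dg τ σ₀ b a then 1 else 0) + (if dg τ σ₀ b b then 1 else 0)))
      + (∑ j ∈ univ \ {a, b}, ((if dg τ σ₀ a j then 1 else 0) + (if dg τ σ₀ b j then 1 else 0)))
      + (∑ i ∈ univ \ {a, b}, ((if dg τ σ₀ i a then 1 else 0) + (if dg τ σ₀ i b then 1 else 0)))
      + ∑ i ∈ univ \ {a, b}, ∑ j ∈ univ \ {a, b}, if dg τ σ₀ i j then 1 else 0 := by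
  simp_rw [split2 hab, Finset.sum_add_distrib]
  ring

lemma kendall_Tp_le (σ₀ σ : Equiv.Perm (Fin n)) {a b : Fin n} (hab : a ≠ b)
    (hdg : dg σ σ₀ a b) :
    kendall n (Tp σ a b) σ₀ ≤ kendall n σ σ₀ := by
  have key : (∑ i : Fin n, ∑ j : Fin n, if dg (Tp σ a b) σ₀ i j then 1 else 0)
      ≤ ∑ i : Fin n, ∑ j : Fin n, if dg σ σ₀ i j then 1 else 0 := by
    rw [expand σ₀ (Tp σ a b) hab, expand σ₀ σ hab]
    refine add_le_add (add_le_add (add_le_add ?_ ?_) ?_) (le_of_eq ?_)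
    · simp [dg_irrefl, dg_Tab_false hdg, dg_Tba_false hdg]
    · refine Finset.sum_le_sum fun j hj => ?_
      rw [Finset.mem_sdiff, Finset.mem_insert, Finset.mem_singleton] at hj
      push_neg at hj
      exact key3' σ₀ σ hj.2.1 hj.2.2 hdg
    · refine Finset.sum_le_sum fun i hi => ?_
      rw [Finset.mem_sdiff, Finset.mem_insert, Finset.mem_singleton] at hi
      push_neg at hi
      calc ((if dg (Tp σ a b) σ₀ i a then 1 else 0) + (if dg (Tp σ a b) σ₀ i b then 1 else 0) : ℕ)
          = (if dg (Tp σ a b) σ₀ a i then 1 else 0) + (if dg (Tp σ a b) σ₀ b i then 1 else 0) := by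
            rw [if_congr (dg_symm _ _ i a) rfl rfl, if_congr (dg_symm _ _ i b) rfl rfl]
        _ ≤ (if dg σ σ₀ a i then 1 else 0) + (if dg σ σ₀ b i then 1 else 0) :=
            key3' σ₀ σ hi.2.1 hi.2.2 hdg
        _ = (if dg σ σ₀ i a then 1 else 0) + (if dg σ σ₀ i b then 1 else 0) := by
            rw [if_congr (dg_symm _ _ a i) rfl rfl, if_congr (dg_symm _ _ b i) rfl rfl]
    · refine Finset.sum_congr rfl fun i hi => Finset.sum_congr rfl fun j hj => ?_
      rw [Finset.mem_sdiff, Finset.mem_insert, Finset.mem_singleton] at hi hj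
      push_neg at hi hj
      exact if_congr (by simp only [dg, Tp_other σ hi.2.1 hi.2.2, Tp_other σ hj.2.1 hj.2.2])
        rfl rfl
  rw [double_eq, double_eq] at key
  omega

lemma dg_xor (σ₀ σ σ' : Equiv.Perm (Fin n)) {i j : Fin n} (hij : i ≠ j) :
    (if dg σ σ' i j then (1:ℝ) else 0)
      = (if dg σ σ₀ i j then (1:ℝ) else 0) + (if dg σ' σ₀ i j then (1:ℝ) else 0)
        - 2 * ((if dg σ σ₀ i j then (1:ℝ) else 0) * (if dg σ' σ₀ i j then (1:ℝ) else 0)) := by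
  have key : ∀ τ : Equiv.Perm (Fin n), (τ i).val ≠ (τ j).val :=
    fun τ h => hij (τ.injective (Fin.val_injective h))
  have hiff : dg σ σ' i j ↔ ¬ (dg σ σ₀ i j ↔ dg σ' σ₀ i j) := by
    have h1 := key σ
    have h2 := key σ'
    have h3 := key σ₀
    simp only [dg, Fin.lt_def]
    omega
  by_cases h1 : dg σ σ₀ i j <;> by_cases h2 : dg σ' σ₀ i j <;>
    simp [h1, h2, hiff] <;> norm_num

section analytic

variable (θ : ℝ) (σ₀ : Equiv.Perm (Fin n))

lemma Zpos : 0 < ∑ π : Equiv.Perm (Fin n), Real.exp (-θ * kendall n π σ₀) :=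
  Finset.sum_pos (fun _ _ => Real.exp_pos _) Finset.univ_nonempty

/-- per-pair disagreement probability -/
noncomputable def qv (i j : Fin n) : ℝ :=
  ∑ σ : Equiv.Perm (Fin n), mallows n θ σ₀ σ * (if dg σ σ₀ i j then (1:ℝ) else 0)

lemma mallows_nonneg (σ : Equiv.Perm (Fin n)) : 0 ≤ mallows n θ σ₀ σ :=
  div_nonneg (Real.exp_pos _).le (Zpos θ σ₀).le

lemma sum_mallows : ∑ σ : Equiv.Perm (Fin n), mallows n θ σ₀ σ = 1 := by
  simp only [mallows]
  rw [← Finset.sum_div]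
  exact div_self (Zpos θ σ₀).ne'

lemma qv_nonneg (i j : Fin n) : 0 ≤ qv θ σ₀ i j :=
  Finset.sum_nonneg fun σ _ => mul_nonneg (mallows_nonneg θ σ₀ σ) (by positivity)

lemma sum_disagree_le (hθ : 0 < θ) {i j : Fin n} (hij : i ≠ j) :
    ∑ σ ∈ Finset.univ.filter (fun σ => dg σ σ₀ i j), Real.exp (-θ * kendall n σ σ₀)
      ≤ ∑ σ ∈ Finset.univ \ Finset.univ.filter (fun σ => dg σ σ₀ i j),
          Real.exp (-θ * kendall n σ σ₀) := by
  set Sd := Finset.univ.filter (fun σ : Equiv.Perm (Fin n) => dg σ σ₀ i j) with hSd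
  have hinj : ∀ σ1 ∈ Sd, ∀ σ2 ∈ Sd, Tp σ1 i j = Tp σ2 i j → σ1 = σ2 := by
    intro σ1 _ σ2 _ h
    calc σ1 = Equiv.swap (Tp σ1 i j j) (Tp σ1 i j i) * Tp σ1 i j := (Tp_retract σ1 i j).symm
      _ = Equiv.swap (Tp σ2 i j j) (Tp σ2 i j i) * Tp σ2 i j := by rw [h]
      _ = σ2 := Tp_retract σ2 i j
  calc ∑ σ ∈ Sd, Real.exp (-θ * kendall n σ σ₀)
      ≤ ∑ σ ∈ Sd, Real.exp (-θ * kendall n (Tp σ i j) σ₀) := by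
        refine Finset.sum_le_sum fun σ hσ => ?_
        have hdg : dg σ σ₀ i j := (Finset.mem_filter.mp hσ).2
        have hk : (kendall n (Tp σ i j) σ₀ : ℝ) ≤ (kendall n σ σ₀ : ℝ) :=
          Nat.cast_le.2 (kendall_Tp_le σ₀ σ hij hdg)
        exact Real.exp_le_exp.2 (by nlinarith)
    _ = ∑ τ ∈ Sd.image (fun σ => Tp σ i j), Real.exp (-θ * kendall n τ σ₀) := by
        rw [Finset.sum_image hinj]
    _ ≤ ∑ σ ∈ Finset.univ \ Sd, Real.exp (-θ * kendall n σ σ₀) := by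
        refine Finset.sum_le_sum_of_subset_of_nonneg ?_ fun _ _ _ => (Real.exp_pos _).le
        intro τ hτ
        obtain ⟨σ, hσ, rfl⟩ := Finset.mem_image.mp hτ
        have hdg : dg σ σ₀ i j := (Finset.mem_filter.mp hσ).2
        rw [Finset.mem_sdiff]
        exact ⟨Finset.mem_univ _, by
          rw [hSd, Finset.mem_filter]
          exact fun h => dg_Tab_false hdg h.2⟩

lemma qv_le_half (hθ : 0 < θ) {i j : Fin n} (hij : i ≠ j) :
    qv θ σ₀ i j ≤ 1 / 2 := by
  set Sd := Finset.univ.filter (fun σ : Equiv.Perm (Fin n) => dg σ σ₀ i j) with hSd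
  have hq : qv θ σ₀ i j
      = (∑ σ ∈ Sd, Real.exp (-θ * kendall n σ σ₀)) /
        (∑ π : Equiv.Perm (Fin n), Real.exp (-θ * kendall n π σ₀)) := by
    rw [qv, hSd, Finset.sum_div, Finset.sum_filter]
    refine Finset.sum_congr rfl fun σ _ => ?_
    by_cases h : dg σ σ₀ i j <;> simp [h, mallows]
  have hsplit : (∑ π : Equiv.Perm (Fin n), Real.exp (-θ * kendall n π σ₀))
      = (∑ σ ∈ Finset.univ \ Sd, Real.exp (-θ * kendall n σ σ₀))
        + ∑ σ ∈ Sd, Real.exp (-θ * kendall n σ σ₀) :=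
    (Finset.sum_sdiff (Finset.filter_subset _ _)).symm
  have hle := sum_disagree_le θ σ₀ hθ hij
  rw [hq, div_le_iff₀ (Zpos θ σ₀)]
  rw [hSd] at *
  linarith [hsplit, hle]

end analytic

lemma sum_pair_algebra {α : Type*} [Fintype α] (w x : α → ℝ) (hw : ∑ a : α, w a = 1) :
    ∑ a : α, ∑ b : α, w a * w b * (x a + x b - 2 * (x a * x b))
      = 2 * (∑ a : α, w a * x a) - 2 * (∑ a : α, w a * x a) ^ 2 := by
  have expand : ∀ a, ∑ b : α, w a * w b * (x a + x b - 2 * (x a * x b))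
      = w a * x a * (∑ b : α, w b) + w a * (∑ b : α, w b * x b)
        - 2 * (w a * x a * (∑ b : α, w b * x b)) := by
    intro a
    rw [Finset.sum_congr rfl (fun b _ => show w a * w b * (x a + x b - 2 * (x a * x b))
      = w a * x a * w b + w a * (w b * x b) - 2 * (w a * x a * (w b * x b)) from by ring)]
    rw [Finset.sum_sub_distrib, Finset.sum_add_distrib, ← Finset.mul_sum, ← Finset.mul_sum,
      ← Finset.mul_sum, ← Finset.mul_sum]
  simp_rw [expand, hw, mul_one]
  rw [Finset.sum_sub_distrib, Finset.sum_add_distrib, ← Finset.sum_mul, ← Finset.mul_sum,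
    ← Finset.sum_mul, hw]
  ring

lemma kendall_cast (σ π : Equiv.Perm (Fin n)) :
    ((kendall n σ π : ℝ))
      = ∑ p : Fin n × Fin n, if p.1 < p.2 ∧ dg σ π p.1 p.2 then (1:ℝ) else 0 := by
  rw [kendall_eq σ π, Nat.cast_sum]
  exact Finset.sum_congr rfl fun p _ => by split_ifs <;> simp

end MallowsAux


open MallowsAux in
/-- For independent `σ, σ' ~ M(σ₀,θ)`:
`(1/2)·E[d(σ,σ')] ≤ E[d(σ,σ₀)] ≤ E[d(σ,σ')]`. -/
theorem expected_pairwise_distance_bounds (n : ℕ) (θ : ℝ) (hθ : 0 < θ)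
    (σ₀ : Equiv.Perm (Fin n)) :
    (1 / 2) * (∑ σ : Equiv.Perm (Fin n), ∑ σ' : Equiv.Perm (Fin n),
        mallows n θ σ₀ σ * mallows n θ σ₀ σ' * kendall n σ σ') ≤
      (∑ σ : Equiv.Perm (Fin n), mallows n θ σ₀ σ * kendall n σ σ₀) ∧
    (∑ σ : Equiv.Perm (Fin n), mallows n θ σ₀ σ * kendall n σ σ₀) ≤
      ∑ σ : Equiv.Perm (Fin n), ∑ σ' : Equiv.Perm (Fin n),
        mallows n θ σ₀ σ * mallows n θ σ₀ σ' * kendall n σ σ' := by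

  classical
  have hw1 : ∑ σ : Equiv.Perm (Fin n), mallows n θ σ₀ σ = 1 := sum_mallows θ σ₀
  -- E0 in per-pair form
  have hE0 : (∑ σ : Equiv.Perm (Fin n), mallows n θ σ₀ σ * (kendall n σ σ₀ : ℝ))
      = ∑ p : Fin n × Fin n, if p.1 < p.2 then qv θ σ₀ p.1 p.2 else 0 := by
    simp_rw [kendall_cast, Finset.mul_sum]
    rw [Finset.sum_comm]
    refine Finset.sum_congr rfl fun p _ => ?_
    by_cases hp : p.1 < p.2
    · simp only [hp, true_and, if_true]
      rfl
    · simp [hp]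
  -- E2 in per-pair form
  have hE2 : (∑ σ : Equiv.Perm (Fin n), ∑ σ' : Equiv.Perm (Fin n),
        mallows n θ σ₀ σ * mallows n θ σ₀ σ' * (kendall n σ σ' : ℝ))
      = ∑ p : Fin n × Fin n, if p.1 < p.2 then
          2 * qv θ σ₀ p.1 p.2 - 2 * (qv θ σ₀ p.1 p.2) ^ 2 else 0 := by
    simp_rw [kendall_cast, Finset.mul_sum]
    simp_rw [Finset.sum_comm (s := (Finset.univ : Finset (Equiv.Perm (Fin n))))
      (t := (Finset.univ : Finset (Fin n × Fin n)))]
    refine Finset.sum_congr rfl fun p _ => ?_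
    by_cases hp : p.1 < p.2
    · simp only [hp, true_and, if_true]
      have hstep : ∀ σ σ' : Equiv.Perm (Fin n),
          mallows n θ σ₀ σ * mallows n θ σ₀ σ' * (if dg σ σ' p.1 p.2 then (1:ℝ) else 0)
          = mallows n θ σ₀ σ * mallows n θ σ₀ σ' *
            ((if dg σ σ₀ p.1 p.2 then (1:ℝ) else 0) + (if dg σ' σ₀ p.1 p.2 then (1:ℝ) else 0)
              - 2 * ((if dg σ σ₀ p.1 p.2 then (1:ℝ) else 0)
                  * (if dg σ' σ₀ p.1 p.2 then (1:ℝ) else 0))) := by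
        intro σ σ'
        rw [dg_xor σ₀ σ σ' (ne_of_lt hp)]
      simp_rw [hstep]
      exact sum_pair_algebra (mallows n θ σ₀)
        (fun σ => if dg σ σ₀ p.1 p.2 then (1:ℝ) else 0) hw1
    · simp [hp]
  rw [hE0, hE2]
  constructor
  · rw [Finset.mul_sum]
    refine Finset.sum_le_sum fun p _ => ?_
    by_cases hp : p.1 < p.2
    · simp only [hp, if_true]
      have h0 := qv_nonneg θ σ₀ p.1 p.2
      nlinarith [sq_nonneg (qv θ σ₀ p.1 p.2)]
    · simp [hp]
  · refine Finset.sum_le_sum fun p _ => ?_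
    by_cases hp : p.1 < p.2
    · simp only [hp, if_true]
      have h0 := qv_nonneg θ σ₀ p.1 p.2
      have hh := qv_le_half θ σ₀ hθ (ne_of_lt hp)
      nlinarith
    · simp [hp]
end

section
/- For two independent Mallows samples with the same center, the expected pairwise Kendall distance is monotone decreasing in the dispersion parameters: if θ ≤ θ', and σ_θ ~ M(σ_0, θ), σ_{θ'} ~ M(σ_0, θ'), τ ~ M(σ_0, θ'') independent, then E[d(σ_{θ'}, τ)] ≤ E[d(σ_θ, τ)]. -/
set_option maxHeartbeats 1000000
set_option linter.unusedSectionVars false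
set_option linter.unusedVariables false


open Finset

namespace MP
variable {n : ℕ}

/-- count of disagreements over all ordered pairs (each unordered pair counted once). -/
def K (σ π : Equiv.Perm (Fin n)) : ℕ :=
  (Finset.univ.filter (fun p : Fin n × Fin n => σ p.1 < σ p.2 ∧ π p.2 < π p.1)).card

lemma kendall_eq_K (σ π : Equiv.Perm (Fin n)) : kendall n σ π = K σ π := by
  classical
  unfold kendall K
  apply Finset.card_nbij' (fun p => if σ p.1 < σ p.2 then p else p.swap)
      (fun q => if q.1 < q.2 then q else q.swap)
  · intro p hp
    simp only [Finset.mem_coe, mem_filter, mem_univ, true_and] at hp ⊢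
    rcases hp with ⟨h12, hA | hB⟩
    · simpa [if_pos hA.1] using hA
    · have : ¬ σ p.1 < σ p.2 := asymm hB.1
      simpa [if_neg this, Prod.swap] using hB
  · intro q hq
    simp only [Finset.mem_coe, mem_filter, mem_univ, true_and] at hq ⊢
    by_cases h12 : q.1 < q.2
    · exact ⟨by simpa [if_pos h12] using h12, by simp [if_pos h12]; exact Or.inl hq⟩
    · have hne : q.1 ≠ q.2 := fun h => lt_irrefl _ (h ▸ hq.1)
      have h21 : q.2 < q.1 := lt_of_le_of_ne (not_lt.mp h12) (Ne.symm hne)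
      refine ⟨by simpa [if_neg h12, Prod.swap] using h21, ?_⟩
      simp [if_neg h12, Prod.swap]
      exact Or.inr ⟨hq.1, hq.2⟩
  · intro p hp
    simp only [Finset.mem_coe, mem_filter, mem_univ, true_and] at hp
    rcases hp with ⟨h12, hA | hB⟩
    · simp [if_pos hA.1, h12]
    · have h1 : ¬ σ p.1 < σ p.2 := asymm hB.1
      have h2 : ¬ p.2 < p.1 := asymm h12
      simp [if_neg h1, Prod.swap, h2]
  · intro q hq
    simp only [Finset.mem_coe, mem_filter, mem_univ, true_and] at hq
    by_cases h12 : q.1 < q.2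
    · simp [if_pos h12, hq.1]
    · have hne : q.1 ≠ q.2 := fun h => lt_irrefl _ (h ▸ hq.1)
      have h21 : q.2 < q.1 := lt_of_le_of_ne (not_lt.mp h12) (Ne.symm hne)
      have : ¬ σ q.2 < σ q.1 := asymm hq.1
      simp [if_neg h12, Prod.swap, this]

lemma K_mul_right (σ π ρ : Equiv.Perm (Fin n)) : K (σ * ρ) (π * ρ) = K σ π := by
  classical
  unfold K
  apply Finset.card_nbij' (fun p : Fin n × Fin n => (ρ p.1, ρ p.2))
      (fun q : Fin n × Fin n => (ρ⁻¹ q.1, ρ⁻¹ q.2)) <;>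
    intro p hp <;>
    simp only [Finset.mem_coe, mem_filter, mem_univ, true_and] at hp ⊢ <;>
    simp_all [Equiv.Perm.mul_apply]

lemma kendall_mul_right (σ π ρ : Equiv.Perm (Fin n)) :
    kendall n (σ * ρ) (π * ρ) = kendall n σ π := by
  rw [kendall_eq_K, kendall_eq_K, K_mul_right]

/-- inversions -/
def inv (σ : Equiv.Perm (Fin n)) : ℕ := K σ 1

lemma kendall_one (σ : Equiv.Perm (Fin n)) : kendall n σ 1 = inv σ := kendall_eq_K σ 1


lemma inv_mul_swap_le {u v : Fin n} (huv : u < v) (σ : Equiv.Perm (Fin n))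
    (hσ : σ v < σ u) : inv (σ * Equiv.swap u v) ≤ inv σ := by
  classical
  set s := Equiv.swap u v with hs
  have hss : ∀ x, s (s x) = x := fun x => Equiv.swap_apply_self u v x
  have hsu : s u = v := Equiv.swap_apply_left u v
  have hsv : s v = u := Equiv.swap_apply_right u v
  set S1 : Finset (Fin n × Fin n) :=
    univ.filter (fun q : Fin n × Fin n => σ q.1 < σ q.2 ∧ s q.2 < s q.1) with hS1
  set S2 : Finset (Fin n × Fin n) :=
    univ.filter (fun q : Fin n × Fin n => σ q.1 < σ q.2 ∧ q.2 < q.1) with hS2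
  have hinv2 : inv σ = S2.card := by
    unfold inv K
    congr 1
  have hinv1 : inv (σ * s) = S1.card := by
    unfold inv K
    rw [hS1]
    apply Finset.card_nbij' (fun p : Fin n × Fin n => (s p.1, s p.2))
        (fun p : Fin n × Fin n => (s p.1, s p.2))
    · intro p hp
      simp only [Finset.mem_coe, mem_filter] at hp ⊢
      simp only [Finset.mem_coe, mem_filter, mem_univ, true_and, Equiv.Perm.mul_apply,
        Equiv.Perm.one_apply] at hp ⊢
      exact ⟨hp.1, by rw [hss, hss]; exact hp.2⟩
    · intro q hq
      simp only [Finset.mem_coe, mem_filter] at hq ⊢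
      simp only [Finset.mem_coe, mem_filter, mem_univ, true_and, Equiv.Perm.mul_apply,
        Equiv.Perm.one_apply] at hq ⊢
      exact ⟨by rw [hss, hss]; exact hq.1, hq.2⟩
    · intro p _; simp [hss]
    · intro p _; simp [hss]
  rw [hinv1, hinv2]
  have hkey : ∀ q : Fin n × Fin n, q ∈ S1 \ S2 →
      (q.1 = u ∧ u < q.2 ∧ q.2 < v ∧ σ u < σ q.2) ∨
      (q.2 = v ∧ u < q.1 ∧ q.1 < v ∧ σ q.1 < σ v) := by
    rintro ⟨a, b⟩ hq
    simp only [hS1, hS2, mem_sdiff, mem_filter, mem_univ, true_and, not_and] at hq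
    obtain ⟨⟨hσq, hsq⟩, hnot⟩ := hq
    have hab : a < b := by
      rcases lt_trichotomy a b with h | h | h
      · exact h
      · exact absurd (h ▸ hσq) (lt_irrefl _)
      · exact absurd h (hnot hσq)
    by_cases hau : a = u
    · by_cases hbv : b = v
      · rw [hau, hbv] at hσq
        exact absurd hσq (asymm hσ)
      · have hbu : b ≠ u := by rw [hau] at hab; exact ne_of_gt hab
        have hsb : s b = b := Equiv.swap_apply_of_ne_of_ne hbu hbv
        rw [hau, hsu, hsb] at hsq
        exact Or.inl ⟨hau, hau ▸ hab, hsq, hau ▸ hσq⟩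
    · by_cases hav : a = v
      · have hvb : v < b := by rw [hav] at hab; exact hab
        have hbv : b ≠ v := ne_of_gt hvb
        have hbu : b ≠ u := ne_of_gt (huv.trans hvb)
        have hsb : s b = b := Equiv.swap_apply_of_ne_of_ne hbu hbv
        rw [hav, hsv, hsb] at hsq
        exact absurd (hsq.trans (huv.trans hvb)) (lt_irrefl _)
      · have hsa : s a = a := Equiv.swap_apply_of_ne_of_ne hau hav
        by_cases hbu : b = u
        · rw [hbu, hsu, hsa] at hsq
          have hau' : a < u := by rw [hbu] at hab; exact hab
          exact absurd ((hau'.trans huv).trans hsq) (lt_irrefl _)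
        · by_cases hbv : b = v
          · rw [hbv, hsv, hsa] at hsq
            exact Or.inr ⟨hbv, hsq, hbv ▸ hab, hbv ▸ hσq⟩
          · have hsb : s b = b := Equiv.swap_apply_of_ne_of_ne hbu hbv
            rw [hsa, hsb] at hsq
            exact absurd hsq (asymm hab)
  have hinj : (S1 \ S2).card ≤ (S2 \ S1).card := by
    apply Finset.card_le_card_of_injOn
        (fun q : Fin n × Fin n => if q.1 = u then ((v, q.2) : Fin n × Fin n) else (q.1, u))
    · intro q hq
      rcases hkey q hq with ⟨h1, h2, h3, h4⟩ | ⟨h1, h2, h3, h4⟩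
      · have hF : (if q.1 = u then ((v, q.2) : Fin n × Fin n) else (q.1, u)) = (v, q.2) :=
          if_pos h1
        simp only [Finset.mem_coe, hF]
        have hq2u : q.2 ≠ u := ne_of_gt h2
        have hq2v : q.2 ≠ v := ne_of_lt h3
        simp only [mem_sdiff, hS1, hS2, mem_filter, mem_univ, true_and, not_and]
        refine ⟨⟨hσ.trans h4, h3⟩, fun _ => ?_⟩
        show ¬ s q.2 < s v
        rw [Equiv.swap_apply_of_ne_of_ne hq2u hq2v, hsv]
        exact asymm h2
      · have hq1u : q.1 ≠ u := ne_of_gt h2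
        have hF : (if q.1 = u then ((v, q.2) : Fin n × Fin n) else (q.1, u)) = (q.1, u) :=
          if_neg hq1u
        simp only [Finset.mem_coe, hF]
        have hq1v : q.1 ≠ v := ne_of_lt h3
        simp only [mem_sdiff, hS1, hS2, mem_filter, mem_univ, true_and, not_and]
        refine ⟨⟨h4.trans hσ, h2⟩, fun _ => ?_⟩
        show ¬ s u < s q.1
        rw [Equiv.swap_apply_of_ne_of_ne hq1u hq1v, hsu]
        exact asymm h3
    · intro q hq q' hq' heq
      dsimp only at heq
      rcases hkey q hq with ⟨h1, h2, h3, h4⟩ | ⟨h1, h2, h3, h4⟩ <;>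
        rcases hkey q' hq' with ⟨h1', h2', h3', h4'⟩ | ⟨h1', h2', h3', h4'⟩
      · rw [if_pos h1, if_pos h1'] at heq
        simp only [Prod.mk.injEq] at heq
        exact Prod.ext (h1.trans h1'.symm) heq.2
      · rw [if_pos h1, if_neg (ne_of_gt h2')] at heq
        simp only [Prod.mk.injEq] at heq
        exact absurd (heq.2 ▸ h2) (lt_irrefl _)
      · rw [if_neg (ne_of_gt h2), if_pos h1'] at heq
        simp only [Prod.mk.injEq] at heq
        exact absurd (heq.2 ▸ h2') (lt_irrefl _)
      · rw [if_neg (ne_of_gt h2), if_neg (ne_of_gt h2')] at heq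
        simp only [Prod.mk.injEq] at heq
        exact Prod.ext heq.1 (h1.trans h1'.symm)
  have c1 := Finset.card_inter_add_card_sdiff S1 S2
  have c2 := Finset.card_inter_add_card_sdiff S2 S1
  rw [Finset.inter_comm] at c2
  omega

lemma le_inv_mul_swap {a b : Fin n} (hab : a < b) (τ : Equiv.Perm (Fin n))
    (h : τ a < τ b) : inv τ ≤ inv (τ * Equiv.swap a b) := by
  have h2 : (τ * Equiv.swap a b) b < (τ * Equiv.swap a b) a := by
    simp only [Equiv.Perm.mul_apply, Equiv.swap_apply_left, Equiv.swap_apply_right]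
    exact h
  have := inv_mul_swap_le hab (τ * Equiv.swap a b) h2
  simpa [mul_assoc, Equiv.swap_mul_self] using this


noncomputable def wt (θ : ℝ) (σ : Equiv.Perm (Fin n)) : ℝ := Real.exp (-θ * inv σ)

lemma wt_pos (θ : ℝ) (σ : Equiv.Perm (Fin n)) : 0 < wt θ σ := Real.exp_pos _

lemma wt_le {θ : ℝ} (hθ : 0 ≤ θ) {σ π : Equiv.Perm (Fin n)} (h : inv π ≤ inv σ) :
    wt θ σ ≤ wt θ π := by
  apply Real.exp_le_exp.mpr
  have : (inv π : ℝ) ≤ (inv σ : ℝ) := Nat.cast_le.mpr h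
  nlinarith

noncomputable def SW (θ : ℝ) (a b : Fin n) : ℝ :=
  ∑ τ : Equiv.Perm (Fin n), if τ a < τ b then wt θ τ else 0

lemma SW_nonneg (θ : ℝ) (a b : Fin n) : 0 ≤ SW θ a b := by
  apply Finset.sum_nonneg
  intro τ _
  split
  · exact (wt_pos θ τ).le
  · rfl

lemma SW_compl {θ : ℝ} {a b : Fin n} (hab : a ≠ b) :
    SW θ a b + SW θ b a = ∑ τ : Equiv.Perm (Fin n), wt θ τ := by
  unfold SW
  rw [← Finset.sum_add_distrib]
  apply Finset.sum_congr rfl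
  intro τ _
  have hne : τ a ≠ τ b := fun h => hab (τ.injective h)
  rcases lt_or_gt_of_ne hne with h | h
  · rw [if_pos h, if_neg (asymm h), add_zero]
  · rw [if_neg (asymm h), if_pos h, zero_add]

lemma SW_swap_lt {θ : ℝ} (hθ : 0 ≤ θ) {a b : Fin n} (hab : a < b) :
    SW θ b a ≤ SW θ a b := by
  unfold SW
  have hre : (∑ τ : Equiv.Perm (Fin n), if τ a < τ b then wt θ (τ * Equiv.swap a b) else 0) =
      ∑ τ : Equiv.Perm (Fin n), if τ b < τ a then wt θ τ else 0 := by
    apply Fintype.sum_equiv (Equiv.mulRight (Equiv.swap a b))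
    intro τ
    simp only [Equiv.coe_mulRight, Equiv.Perm.mul_apply, Equiv.swap_apply_left,
      Equiv.swap_apply_right]
  rw [← hre]
  apply Finset.sum_le_sum
  intro τ _
  split
  · next h => exact wt_le hθ (le_inv_mul_swap hab τ h)
  · rfl

lemma SW_mono_left {θ : ℝ} (hθ : 0 ≤ θ) {p k v : Fin n} (hpk : p < k) (hkv : k < v) :
    SW θ v p ≤ SW θ v k := by
  classical
  have hvp : (v:Fin n) ≠ p := ne_of_gt (hpk.trans hkv)
  have hvk : (v:Fin n) ≠ k := ne_of_gt hkv
  have split1 : SW θ v p =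
      (∑ τ : Equiv.Perm (Fin n), if τ v < τ p ∧ τ v < τ k then wt θ τ else 0)
      + ∑ τ : Equiv.Perm (Fin n), if τ k < τ v ∧ τ v < τ p then wt θ τ else 0 := by
    unfold SW
    rw [← Finset.sum_add_distrib]
    apply Finset.sum_congr rfl
    intro τ _
    have hne : τ v ≠ τ k := fun h => hvk (τ.injective h)
    rcases lt_or_gt_of_ne hne with h | h
    · by_cases h2 : τ v < τ p
      · rw [if_pos h2, if_pos ⟨h2, h⟩, if_neg (fun hc => asymm h hc.1), add_zero]
      · rw [if_neg h2, if_neg (fun hc => h2 hc.1), if_neg (fun hc => h2 hc.2), add_zero]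
    · by_cases h2 : τ v < τ p
      · rw [if_pos h2, if_neg (fun hc => asymm h hc.2), if_pos ⟨h, h2⟩, zero_add]
      · rw [if_neg h2, if_neg (fun hc => h2 hc.1), if_neg (fun hc => h2 hc.2), add_zero]
  have split2 : SW θ v k =
      (∑ τ : Equiv.Perm (Fin n), if τ v < τ p ∧ τ v < τ k then wt θ τ else 0)
      + ∑ τ : Equiv.Perm (Fin n), if τ p < τ v ∧ τ v < τ k then wt θ τ else 0 := by
    unfold SW
    rw [← Finset.sum_add_distrib]
    apply Finset.sum_congr rfl
    intro τ _
    have hne : τ v ≠ τ p := fun h => hvp (τ.injective h)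
    rcases lt_or_gt_of_ne hne with h | h
    · by_cases h2 : τ v < τ k
      · rw [if_pos h2, if_pos ⟨h, h2⟩, if_neg (fun hc => asymm h hc.1), add_zero]
      · rw [if_neg h2, if_neg (fun hc => h2 hc.2), if_neg (fun hc => h2 hc.2), add_zero]
    · by_cases h2 : τ v < τ k
      · rw [if_pos h2, if_neg (fun hc => asymm h hc.1), if_pos ⟨h, h2⟩, zero_add]
      · rw [if_neg h2, if_neg (fun hc => h2 hc.2), if_neg (fun hc => h2 hc.2), add_zero]
  rw [split1, split2]
  refine add_le_add le_rfl ?_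
  have hre : (∑ τ : Equiv.Perm (Fin n), if τ k < τ v ∧ τ v < τ p then wt θ τ else 0) =
      ∑ τ : Equiv.Perm (Fin n),
        if τ p < τ v ∧ τ v < τ k then wt θ (τ * Equiv.swap p k) else 0 := by
    apply Fintype.sum_equiv (Equiv.mulRight (Equiv.swap p k))
    intro τ
    have h1 : (τ * Equiv.swap p k) k = τ p := by
      simp [Equiv.Perm.mul_apply, Equiv.swap_apply_right]
    have h2 : (τ * Equiv.swap p k) p = τ k := by
      simp [Equiv.Perm.mul_apply, Equiv.swap_apply_left]
    have h3 : (τ * Equiv.swap p k) v = τ v := by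
      simp [Equiv.Perm.mul_apply,
        Equiv.swap_apply_of_ne_of_ne (ne_of_gt (hpk.trans hkv)) (ne_of_gt hkv)]
    simp only [Equiv.coe_mulRight, h1, h2, h3, mul_assoc, Equiv.swap_mul_self, mul_one]
  rw [hre]
  apply Finset.sum_le_sum
  intro τ _
  split
  · next h => exact wt_le hθ (le_inv_mul_swap hpk τ (h.1.trans h.2))
  · rfl


/-- left inversion count at position k -/
def lcodeNat (σ : Equiv.Perm (Fin n)) (k : Fin n) : ℕ :=
  (Finset.univ.filter (fun i => i < k ∧ σ k < σ i)).card

/-- number of smaller values to the right of position k -/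
def rsm (σ : Equiv.Perm (Fin n)) (k : Fin n) : ℕ :=
  (Finset.univ.filter (fun i => k < i ∧ σ i < σ k)).card

lemma card_filter_lt (k : Fin n) : (univ.filter (fun i : Fin n => i < k)).card = k.val := by
  have h : univ.filter (fun i : Fin n => i < k) = Finset.Iio k := by
    ext i; simp
  rw [h, Fin.card_Iio]

lemma lcode_le (σ : Equiv.Perm (Fin n)) (k : Fin n) : lcodeNat σ k ≤ k.val := by
  rw [← card_filter_lt k]
  apply Finset.card_le_card
  intro i hi
  simp only [mem_filter, mem_univ, true_and] at hi ⊢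
  exact hi.1

lemma totality (σ : Equiv.Perm (Fin n)) (k : Fin n) :
    (σ k).val + lcodeNat σ k = k.val + rsm σ k := by
  classical
  have ha : (univ.filter (fun i : Fin n => σ i < σ k)).card = (σ k).val := by
    rw [← card_filter_lt (σ k)]
    apply Finset.card_nbij' (fun i => σ i) (fun v => σ.symm v)
    · intro i hi; simp only [Finset.mem_coe, mem_filter, mem_univ, true_and] at hi ⊢; exact hi
    · intro v hv; simp only [Finset.mem_coe, mem_filter, mem_univ, true_and] at hv ⊢
      rwa [Equiv.apply_symm_apply]
    · intro i _; exact σ.symm_apply_apply i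
    · intro v _; exact σ.apply_symm_apply v
  have hsplit1 : (univ.filter (fun i : Fin n => σ i < σ k)) =
      (univ.filter (fun i : Fin n => i < k ∧ σ i < σ k)) ∪
      (univ.filter (fun i : Fin n => k < i ∧ σ i < σ k)) := by
    ext i
    simp only [mem_filter, mem_univ, true_and, mem_union]
    constructor
    · intro h
      rcases lt_trichotomy i k with hc | hc | hc
      · exact Or.inl ⟨hc, h⟩
      · rw [hc] at h; exact absurd h (lt_irrefl _)
      · exact Or.inr ⟨hc, h⟩
    · rintro (⟨_, h⟩ | ⟨_, h⟩) <;> exact h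
  have hd1 : Disjoint (univ.filter (fun i : Fin n => i < k ∧ σ i < σ k))
      (univ.filter (fun i : Fin n => k < i ∧ σ i < σ k)) := by
    rw [Finset.disjoint_left]
    intro i h1 h2
    simp only [mem_filter, mem_univ, true_and] at h1 h2
    exact absurd (h1.1.trans h2.1) (lt_irrefl _)
  have hsplit2 : (univ.filter (fun i : Fin n => i < k)) =
      (univ.filter (fun i : Fin n => i < k ∧ σ i < σ k)) ∪
      (univ.filter (fun i : Fin n => i < k ∧ σ k < σ i)) := by
    ext i
    simp only [mem_filter, mem_univ, true_and, mem_union]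
    constructor
    · intro h
      have hne : σ i ≠ σ k := fun he => (ne_of_lt h) (σ.injective he)
      rcases lt_or_gt_of_ne hne with hc | hc
      · exact Or.inl ⟨h, hc⟩
      · exact Or.inr ⟨h, hc⟩
    · rintro (⟨h, _⟩ | ⟨h, _⟩) <;> exact h
  have hd2 : Disjoint (univ.filter (fun i : Fin n => i < k ∧ σ i < σ k))
      (univ.filter (fun i : Fin n => i < k ∧ σ k < σ i)) := by
    rw [Finset.disjoint_left]
    intro i h1 h2
    simp only [mem_filter, mem_univ, true_and] at h1 h2
    exact absurd (h1.2.trans h2.2) (lt_irrefl _)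
  have e1 : (σ k).val =
      (univ.filter (fun i : Fin n => i < k ∧ σ i < σ k)).card + rsm σ k := by
    rw [← ha, hsplit1, Finset.card_union_of_disjoint hd1]; rfl
  have e2 : k.val =
      (univ.filter (fun i : Fin n => i < k ∧ σ i < σ k)).card + lcodeNat σ k := by
    rw [← card_filter_lt k, hsplit2, Finset.card_union_of_disjoint hd2]; rfl
  omega

lemma code_inj_aux (σ π : Equiv.Perm (Fin n)) (k : Fin n)
    (habove : ∀ j, k < j → σ j = π j)
    (hcode : lcodeNat σ k = lcodeNat π k) (hlt : σ k < π k) : False := by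
  classical
  have t1 := totality σ k
  have t2 := totality π k
  have hfil : (univ.filter (fun i : Fin n => k < i ∧ π i < π k)) =
      univ.filter (fun i : Fin n => k < i ∧ σ i < π k) := by
    ext i
    simp only [mem_filter, mem_univ, true_and]
    constructor
    · rintro ⟨h1, h2⟩; exact ⟨h1, by rwa [habove i h1]⟩
    · rintro ⟨h1, h2⟩; exact ⟨h1, by rwa [← habove i h1]⟩
  have hsub : (univ.filter (fun i : Fin n => k < i ∧ σ i < π k)) ⊆
      (univ.filter (fun i : Fin n => k < i ∧ σ i < σ k)) ∪
      (univ.filter (fun i : Fin n => k < i ∧ σ k < σ i ∧ σ i < π k)) := by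
    intro i hi
    simp only [mem_filter, mem_univ, true_and, mem_union] at hi ⊢
    obtain ⟨h1, h2⟩ := hi
    have hne : σ i ≠ σ k := fun he => (ne_of_gt h1) (σ.injective he)
    rcases lt_or_gt_of_ne hne with hc | hc
    · exact Or.inl ⟨h1, hc⟩
    · exact Or.inr ⟨h1, hc, h2⟩
  have hbound : (univ.filter (fun i : Fin n => k < i ∧ σ k < σ i ∧ σ i < π k)).card ≤
      (π k).val - (σ k).val - 1 := by
    rw [← Fin.card_Ioo (σ k) (π k)]
    apply Finset.card_le_card_of_injOn (fun i => σ i)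
    · intro i hi
      simp only [mem_filter, mem_univ, true_and, Finset.mem_coe] at hi
      rw [Finset.mem_coe, Finset.mem_Ioo]
      exact ⟨hi.2.1, hi.2.2⟩
    · intro i _ j _ h
      exact σ.injective h
  have hcard : rsm π k ≤ rsm σ k + ((π k).val - (σ k).val - 1) := by
    unfold rsm
    rw [hfil]
    calc (univ.filter (fun i : Fin n => k < i ∧ σ i < π k)).card
        ≤ ((univ.filter (fun i : Fin n => k < i ∧ σ i < σ k)) ∪
          (univ.filter (fun i : Fin n => k < i ∧ σ k < σ i ∧ σ i < π k))).card :=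
          Finset.card_le_card hsub
      _ ≤ _ := by
          refine (Finset.card_union_le _ _).trans ?_
          exact Nat.add_le_add_left hbound _
  have hltv : (σ k).val < (π k).val := hlt
  omega

def lcode (σ : Equiv.Perm (Fin n)) : ∀ k : Fin n, Fin (k.val + 1) :=
  fun k => ⟨lcodeNat σ k, Nat.lt_succ_of_le (lcode_le σ k)⟩

lemma lcode_injective : Function.Injective (lcode (n := n)) := by
  classical
  intro σ π h
  by_contra hne
  have hex : ∃ k, σ k ≠ π k := by
    by_contra hall
    push_neg at hall
    exact hne (Equiv.ext hall)
  set T := univ.filter (fun k : Fin n => σ k ≠ π k) with hT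
  have hTne : T.Nonempty := by
    obtain ⟨k, hk⟩ := hex
    exact ⟨k, by simp [hT, hk]⟩
  set k := T.max' hTne with hk
  have hmem : σ k ≠ π k := by
    have := T.max'_mem hTne
    rw [← hk] at this
    simpa [hT] using this
  have habove : ∀ j, k < j → σ j = π j := by
    intro j hj
    by_contra hne2
    have : j ∈ T := by simp [hT, hne2]
    exact absurd (hj.trans_le (T.le_max' j this)) (lt_irrefl _)
  have hcode : lcodeNat σ k = lcodeNat π k := by
    have := congrFun h k
    exact congrArg Fin.val this
  rcases lt_or_gt_of_ne hmem with hc | hc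
  · exact code_inj_aux σ π k habove hcode hc
  · exact code_inj_aux π σ k (fun j hj => (habove j hj).symm) hcode.symm hc

lemma lcode_bij : Function.Bijective (lcode (n := n)) :=
  (Fintype.bijective_iff_injective_and_card lcode).mpr ⟨lcode_injective, by
    rw [Fintype.card_pi, Fintype.card_perm, Fintype.card_fin]
    simp only [Fintype.card_fin]
    rw [Fin.prod_univ_eq_prod_range (fun i => i + 1) n]
    exact (Finset.prod_range_add_one_eq_factorial n).symm⟩

noncomputable def codeEquiv : Equiv.Perm (Fin n) ≃ (∀ k : Fin n, Fin (k.val + 1)) :=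
  Equiv.ofBijective lcode lcode_bij

lemma inv_eq_sum_lcode (σ : Equiv.Perm (Fin n)) : inv σ = ∑ k, lcodeNat σ k := by
  unfold inv K lcodeNat
  rw [Finset.card_filter, Fintype.sum_prod_type]
  apply Finset.sum_congr rfl
  intro k _
  rw [Finset.card_filter]
  apply Finset.sum_congr rfl
  intro i _
  simp only [Equiv.Perm.one_apply]
  by_cases h1 : i < k <;> by_cases h2 : σ k < σ i <;> simp [h1, h2]


lemma move_lcode_ne (σ : Equiv.Perm (Fin n)) {p k : Fin n} (hpk : p < k)
    (hval : σ p < σ k) (hmax : ∀ m, m < k → ¬(σ p < σ m ∧ σ m < σ k))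
    {m : Fin n} (hm : m ≠ k) :
    lcodeNat (σ * Equiv.swap p k) m = lcodeNat σ m := by
  classical
  set s := Equiv.swap p k with hs
  have hsp : s p = k := Equiv.swap_apply_left p k
  have hsk : s k = p := Equiv.swap_apply_right p k
  have hso : ∀ x, x ≠ p → x ≠ k → s x = x := fun x h1 h2 => Equiv.swap_apply_of_ne_of_ne h1 h2
  have hss : ∀ x, s (s x) = x := fun x => Equiv.swap_apply_self p k x
  rcases lt_or_gt_of_ne hm with hmk | hmk
  · -- m < k : set equality
    by_cases hmp : m = p
    · -- m = p : σ' m = σ k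
      subst hmp
      unfold lcodeNat
      apply congrArg Finset.card
      ext i
      simp only [mem_filter]
      simp only [mem_filter, mem_univ, true_and, Equiv.Perm.mul_apply]
      constructor
      · rintro ⟨him, h2⟩
        refine ⟨him, ?_⟩
        rw [hsp] at h2
        rw [hso i (ne_of_lt him) (ne_of_lt (him.trans hmk))] at h2
        -- h2 : σ k < σ i ; need σ m=σ p < σ i
        exact hval.trans h2
      · rintro ⟨him, h2⟩
        refine ⟨him, ?_⟩
        rw [hsp, hso i (ne_of_lt him) (ne_of_lt (him.trans hmk))]
        -- need σ k < σ i given σ p < σ i, i < k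
        have hi := hmax i (him.trans hmk)
        have hik : σ i ≠ σ k := fun h => (ne_of_lt (him.trans hmk)) (σ.injective h)
        rcases lt_or_gt_of_ne hik with hc | hc
        · exact absurd ⟨h2, hc⟩ hi
        · exact hc
    · -- m ≠ p, m < k
      unfold lcodeNat
      apply congrArg Finset.card
      ext i
      simp only [mem_filter]
      simp only [mem_filter, mem_univ, true_and, Equiv.Perm.mul_apply]
      rw [hso m hmp (ne_of_lt hmk)]
      constructor
      · rintro ⟨him, h2⟩
        refine ⟨him, ?_⟩
        by_cases hip : i = p
        · rw [hip, hsp] at h2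
          -- h2 : σ m < σ k; need σ m < σ p
          have hmm := hmax m hmk
          have hne : σ m ≠ σ p := fun h => hmp (σ.injective h)
          rcases lt_or_gt_of_ne hne with hc | hc
          · exact hip ▸ hc
          · exact absurd ⟨hc, h2⟩ hmm
        · rwa [hso i hip (ne_of_lt (him.trans hmk))] at h2
      · rintro ⟨him, h2⟩
        refine ⟨him, ?_⟩
        by_cases hip : i = p
        · rw [hip, hsp]
          rw [hip] at h2
          exact h2.trans hval
        · rwa [hso i hip (ne_of_lt (him.trans hmk))]
  · -- m > k : bijection i ↦ s i
    have hmp : m ≠ p := ne_of_gt (hpk.trans hmk)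
    have hsm : s m = m := hso m hmp (ne_of_gt hmk)
    unfold lcodeNat
    apply Finset.card_nbij' (fun i => s i) (fun i => s i)
    · intro i hi
      simp only [Finset.mem_coe, mem_filter] at hi ⊢
      simp only [Finset.mem_coe, mem_filter, mem_univ, true_and, Equiv.Perm.mul_apply] at hi ⊢
      obtain ⟨h1, h2⟩ := hi
      rw [hsm] at h2
      constructor
      · by_cases hip : i = p
        · rw [hip, hsp]; exact hmk
        · by_cases hik : i = k
          · rw [hik, hsk]; exact hpk.trans hmk
          · rwa [hso i hip hik]
      · exact h2
    · intro i hi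
      simp only [Finset.mem_coe, mem_filter] at hi ⊢
      simp only [Finset.mem_coe, mem_filter, mem_univ, true_and, Equiv.Perm.mul_apply] at hi ⊢
      obtain ⟨h1, h2⟩ := hi
      rw [hsm]
      constructor
      · by_cases hip : i = p
        · rw [hip, hsp]; exact hmk
        · by_cases hik : i = k
          · rw [hik, hsk]; exact hpk.trans hmk
          · rwa [hso i hip hik]
      · rw [hss i]; exact h2
    · intro i _; exact hss i
    · intro i _; exact hss i

lemma move_lcode_eq (σ : Equiv.Perm (Fin n)) {p k : Fin n} (hpk : p < k)
    (hval : σ p < σ k) (hmax : ∀ m, m < k → ¬(σ p < σ m ∧ σ m < σ k)) :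
    lcodeNat (σ * Equiv.swap p k) k = lcodeNat σ k + 1 := by
  classical
  set s := Equiv.swap p k with hs
  have hsp : s p = k := Equiv.swap_apply_left p k
  have hsk : s k = p := Equiv.swap_apply_right p k
  have hso : ∀ x, x ≠ p → x ≠ k → s x = x := fun x h1 h2 => Equiv.swap_apply_of_ne_of_ne h1 h2
  unfold lcodeNat
  have hset : (univ.filter (fun i : Fin n => i < k ∧ (σ * s) k < (σ * s) i)) =
      insert p (univ.filter (fun i : Fin n => i < k ∧ σ k < σ i)) := by
    ext i
    simp only [mem_filter, mem_univ, true_and, mem_insert, Equiv.Perm.mul_apply, hsk]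
    constructor
    · rintro ⟨h1, h2⟩
      by_cases hip : i = p
      · exact Or.inl hip
      · rw [hso i hip (ne_of_lt h1)] at h2
        -- h2 : σ p < σ i ; i < k ; i ≠ p ⇒ σ i > σ k by hmax
        have hik : σ i ≠ σ k := fun h => (ne_of_lt h1) (σ.injective h)
        rcases lt_or_gt_of_ne hik with hc | hc
        · exact absurd ⟨h2, hc⟩ (hmax i h1)
        · exact Or.inr ⟨h1, hc⟩
    · rintro (hip | ⟨h1, h2⟩)
      · rw [hip, hsp]
        exact ⟨hpk, hval⟩
      · have hip : i ≠ p := fun h => (asymm hval) (h ▸ h2 : σ k < σ p)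
        rw [hso i hip (ne_of_lt h1)]
        exact ⟨h1, hval.trans h2⟩
  rw [hset, Finset.card_insert_of_notMem]
  intro hmem
  simp only [mem_filter, mem_univ, true_and] at hmem
  exact absurd (hval.trans hmem.2) (lt_irrefl _)


noncomputable def G0 (η : ℝ) (σ : Equiv.Perm (Fin n)) : ℝ :=
  ∑ τ : Equiv.Perm (Fin n), wt η τ * (K σ τ : ℝ)

lemma G0_expand (η : ℝ) (σ : Equiv.Perm (Fin n)) :
    G0 η σ = ∑ q : Fin n × Fin n, (if σ q.1 < σ q.2 then SW η q.2 q.1 else 0) := by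
  unfold G0
  have hK : ∀ τ : Equiv.Perm (Fin n), ((K σ τ : ℝ)) =
      ∑ q : Fin n × Fin n, (if σ q.1 < σ q.2 ∧ τ q.2 < τ q.1 then (1:ℝ) else 0) := by
    intro τ
    unfold K
    rw [Finset.card_filter]
    push_cast
    apply Finset.sum_congr rfl
    intro q _
    split <;> simp
  calc ∑ τ : Equiv.Perm (Fin n), wt η τ * (K σ τ : ℝ)
      = ∑ τ : Equiv.Perm (Fin n), ∑ q : Fin n × Fin n,
          (if σ q.1 < σ q.2 ∧ τ q.2 < τ q.1 then wt η τ else 0) := by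
        apply Finset.sum_congr rfl
        intro τ _
        rw [hK, Finset.mul_sum]
        apply Finset.sum_congr rfl
        intro q _
        split <;> simp
    _ = ∑ q : Fin n × Fin n, ∑ τ : Equiv.Perm (Fin n),
          (if σ q.1 < σ q.2 ∧ τ q.2 < τ q.1 then wt η τ else 0) := Finset.sum_comm
    _ = _ := by
        apply Finset.sum_congr rfl
        intro q _
        by_cases hq : σ q.1 < σ q.2
        · rw [if_pos hq]
          unfold SW
          apply Finset.sum_congr rfl
          intro τ _
          by_cases h2 : τ q.2 < τ q.1
          · rw [if_pos ⟨hq, h2⟩, if_pos h2]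
          · rw [if_neg (fun hc => h2 hc.2), if_neg h2]
        · rw [if_neg hq]
          apply Finset.sum_eq_zero
          intro τ _
          rw [if_neg (fun hc => hq hc.1)]

lemma move_G0_le {η : ℝ} (hη : 0 ≤ η) (σ : Equiv.Perm (Fin n)) {p k : Fin n} (hpk : p < k)
    (hval : σ p < σ k) (hmax : ∀ m, m < k → ¬(σ p < σ m ∧ σ m < σ k)) :
    G0 η σ ≤ G0 η (σ * Equiv.swap p k) := by
  classical
  set s := Equiv.swap p k with hs
  have hsp : s p = k := Equiv.swap_apply_left p k
  have hsk : s k = p := Equiv.swap_apply_right p k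
  have hso : ∀ x, x ≠ p → x ≠ k → s x = x := fun x h1 h2 => Equiv.swap_apply_of_ne_of_ne h1 h2
  have hpk' : p ≠ k := ne_of_lt hpk
  rw [G0_expand, G0_expand, ← sub_nonneg, ← Finset.sum_sub_distrib]
  set D : Fin n × Fin n → ℝ := fun q =>
    (if (σ * s) q.1 < (σ * s) q.2 then SW η q.2 q.1 else 0)
    - (if σ q.1 < σ q.2 then SW η q.2 q.1 else 0) with hD
  set V : Finset (Fin n) := univ.filter (fun v : Fin n => k < v ∧ σ p < σ v ∧ σ v < σ k) with hV
  have hpV : p ∉ V := by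
    simp only [hV, mem_filter, mem_univ, true_and, not_and]
    intro h
    exact absurd (hpk.trans h) (lt_irrefl _)
  have hkV : k ∉ V := by simp [hV]
  have hVfacts : ∀ v ∈ V, k < v ∧ σ p < σ v ∧ σ v < σ k := by
    intro v hv; simpa [hV] using hv
  -- key orientation iffs
  have keyiff : ∀ j : Fin n, j ≠ p → j ≠ k → ¬(σ p < σ j ∧ σ j < σ k) →
      ((σ p < σ j ↔ σ k < σ j) ∧ (σ j < σ k ↔ σ j < σ p)) := by
    intro j hjp hjk hj
    have hjkv : σ j ≠ σ k := fun h => hjk (σ.injective h)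
    have hjpv : σ j ≠ σ p := fun h => hjp (σ.injective h)
    constructor
    · constructor
      · intro h
        rcases lt_or_gt_of_ne hjkv with hc | hc
        · exact absurd ⟨h, hc⟩ hj
        · exact hc
      · intro h; exact hval.trans h
    · constructor
      · intro h
        rcases lt_or_gt_of_ne hjpv with hc | hc
        · exact hc
        · exact absurd ⟨hc, h⟩ hj
      · intro h; exact h.trans hval
  have hnpV : ∀ j : Fin n, j ≠ k → j ∉ V → ¬(σ p < σ j ∧ σ j < σ k) := by
    intro j hjk hjV
    rcases lt_or_gt_of_ne hjk with hc | hc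
    · exact hmax j hc
    · intro hcon
      exact hjV (by simp [hV]; exact ⟨hc, hcon.1, hcon.2⟩)
  -- applications of s
  have apps : ∀ x, x ≠ p → x ≠ k → (σ * s) x = σ x := by
    intro x h1 h2; simp only [Equiv.Perm.mul_apply, hso x h1 h2]
  have appp : (σ * s) p = σ k := by simp only [Equiv.Perm.mul_apply, hsp]
  have appk : (σ * s) k = σ p := by simp only [Equiv.Perm.mul_apply, hsk]
  -- zero lemmas
  have Dzero_oo : ∀ i j : Fin n, i ≠ p → i ≠ k → j ≠ p → j ≠ k → D (i, j) = 0 := by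
    intro i j h1 h2 h3 h4
    simp only [hD, apps i h1 h2, apps j h3 h4, sub_self]
  have Dzero_diag : ∀ i : Fin n, D (i, i) = 0 := by
    intro i
    simp only [hD, if_neg (lt_irrefl _), sub_self]
  have Dzero_jp : ∀ i : Fin n, i ≠ p → i ≠ k → i ∉ V → D (i, p) = 0 := by
    intro i h1 h2 hiV
    have hiff := (keyiff i h1 h2 (hnpV i h2 hiV)).2
    simp only [hD, apps i h1 h2, appp]
    rw [if_congr hiff rfl rfl, sub_self]
  have Dzero_jk : ∀ i : Fin n, i ≠ p → i ≠ k → i ∉ V → D (i, k) = 0 := by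
    intro i h1 h2 hiV
    have hiff := (keyiff i h1 h2 (hnpV i h2 hiV)).2
    simp only [hD, apps i h1 h2, appk]
    rw [if_congr hiff.symm rfl rfl, sub_self]
  have Dzero_pj : ∀ j : Fin n, j ≠ k → j ∉ V → D (p, j) = 0 := by
    intro j hjk hjV
    by_cases hjp : j = p
    · rw [hjp]; exact Dzero_diag p
    · have hiff := (keyiff j hjp hjk (hnpV j hjk hjV)).1
      simp only [hD, apps j hjp hjk, appp]
      rw [if_congr hiff.symm rfl rfl, sub_self]
  have Dzero_kj : ∀ j : Fin n, j ≠ p → j ∉ V → D (k, j) = 0 := by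
    intro j hjp hjV
    by_cases hjk : j = k
    · rw [hjk]; exact Dzero_diag k
    · have hiff := (keyiff j hjp hjk (hnpV j hjk hjV)).1
      simp only [hD, apps j hjp hjk, appk]
      rw [if_congr hiff rfl rfl, sub_self]
  -- evaluations
  have hDpk : D (p, k) = -SW η k p := by
    simp only [hD, appp, appk]
    rw [if_neg (asymm hval), if_pos hval, zero_sub]
  have hDkp : D (k, p) = SW η p k := by
    simp only [hD, appp, appk]
    rw [if_pos hval, if_neg (asymm hval), sub_zero]
  have hDpv : ∀ v ∈ V, D (p, v) = -SW η v p := by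
    intro v hv
    obtain ⟨h1, h2, h3⟩ := hVfacts v hv
    have hvp : v ≠ p := ne_of_gt (hpk.trans h1)
    have hvk : v ≠ k := ne_of_gt h1
    simp only [hD, appp, apps v hvp hvk]
    rw [if_neg (asymm h3), if_pos h2, zero_sub]
  have hDvp : ∀ v ∈ V, D (v, p) = SW η p v := by
    intro v hv
    obtain ⟨h1, h2, h3⟩ := hVfacts v hv
    have hvp : v ≠ p := ne_of_gt (hpk.trans h1)
    have hvk : v ≠ k := ne_of_gt h1
    simp only [hD, appp, apps v hvp hvk]
    rw [if_pos h3, if_neg (asymm h2), sub_zero]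
  have hDkv : ∀ v ∈ V, D (k, v) = SW η v k := by
    intro v hv
    obtain ⟨h1, h2, h3⟩ := hVfacts v hv
    have hvp : v ≠ p := ne_of_gt (hpk.trans h1)
    have hvk : v ≠ k := ne_of_gt h1
    simp only [hD, appk, apps v hvp hvk]
    rw [if_pos h2, if_neg (asymm h3), sub_zero]
  have hDvk : ∀ v ∈ V, D (v, k) = -SW η k v := by
    intro v hv
    obtain ⟨h1, h2, h3⟩ := hVfacts v hv
    have hvp : v ≠ p := ne_of_gt (hpk.trans h1)
    have hvk : v ≠ k := ne_of_gt h1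
    simp only [hD, appk, apps v hvp hvk]
    rw [if_neg (asymm h2), if_pos h3, zero_sub]
  -- restructure the sum
  rw [Fintype.sum_prod_type]
  have hrows : (∑ i : Fin n, ∑ j : Fin n, D (i, j)) =
      ∑ i ∈ insert p (insert k V), ∑ j : Fin n, D (i, j) := by
    symm
    apply Finset.sum_subset (Finset.subset_univ _)
    intro i _ hiI
    have hip : i ≠ p := fun h => hiI (by rw [h]; exact Finset.mem_insert_self _ _)
    have hik : i ≠ k := fun h => hiI (by rw [h]; exact Finset.mem_insert_of_mem (Finset.mem_insert_self _ _))
    have hiV : i ∉ V := fun h => hiI (Finset.mem_insert_of_mem (Finset.mem_insert_of_mem h))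
    apply Finset.sum_eq_zero
    intro j _
    by_cases hjp : j = p
    · rw [hjp]; exact Dzero_jp i hip hik hiV
    · by_cases hjk : j = k
      · rw [hjk]; exact Dzero_jk i hip hik hiV
      · exact Dzero_oo i j hip hik hjp hjk
  rw [hrows]
  have hrowp : (∑ j : Fin n, D (p, j)) = D (p, k) + ∑ v ∈ V, D (p, v) := by
    have h1 : (∑ j : Fin n, D (p, j)) = ∑ j ∈ insert k V, D (p, j) := by
      symm
      apply Finset.sum_subset (Finset.subset_univ _)
      intro j _ hjI
      exact Dzero_pj j (fun h => hjI (h ▸ Finset.mem_insert_self _ _))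
        (fun h => hjI (Finset.mem_insert_of_mem h))
    rw [h1, Finset.sum_insert hkV]
  have hrowk : (∑ j : Fin n, D (k, j)) = D (k, p) + ∑ v ∈ V, D (k, v) := by
    have h1 : (∑ j : Fin n, D (k, j)) = ∑ j ∈ insert p V, D (k, j) := by
      symm
      apply Finset.sum_subset (Finset.subset_univ _)
      intro j _ hjI
      exact Dzero_kj j (fun h => hjI (h ▸ Finset.mem_insert_self _ _))
        (fun h => hjI (Finset.mem_insert_of_mem h))
    rw [h1, Finset.sum_insert hpV]
  have hrowv : ∀ v ∈ V, (∑ j : Fin n, D (v, j)) = D (v, p) + D (v, k) := by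
    intro v hv
    obtain ⟨h1, _, _⟩ := hVfacts v hv
    have hvp : v ≠ p := ne_of_gt (hpk.trans h1)
    have hvk : v ≠ k := ne_of_gt h1
    have h2 : (∑ j : Fin n, D (v, j)) = ∑ j ∈ ({p, k} : Finset (Fin n)), D (v, j) := by
      symm
      apply Finset.sum_subset (Finset.subset_univ _)
      intro j _ hjI
      simp only [Finset.mem_insert, Finset.mem_singleton] at hjI
      push_neg at hjI
      exact Dzero_oo v j hvp hvk hjI.1 hjI.2
    rw [h2, Finset.sum_pair hpk']
  rw [Finset.sum_insert (show p ∉ insert k V by simp [Finset.mem_insert, hpk', hpV]),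
    Finset.sum_insert hkV]
  have s0 : ∑ v ∈ V, (∑ j : Fin n, D (v, j)) = ∑ v ∈ V, (SW η p v + -SW η k v) :=
    Finset.sum_congr rfl (fun v hv => by rw [hrowv v hv, hDvp v hv, hDvk v hv])
  have s1 : ∑ v ∈ V, D (p, v) = ∑ v ∈ V, -SW η v p := Finset.sum_congr rfl hDpv
  have s2 : ∑ v ∈ V, D (k, v) = ∑ v ∈ V, SW η v k := Finset.sum_congr rfl hDkv
  rw [hrowp, hrowk, s0, s1, s2, hDpk, hDkp]
  have hmain : 0 ≤ SW η p k - SW η k p := sub_nonneg.mpr (SW_swap_lt hη hpk)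
  have hVterm : ∀ v ∈ V, 0 ≤ -SW η v p + (SW η v k + (SW η p v + -SW η k v)) := by
    intro v hv
    obtain ⟨h1, _, _⟩ := hVfacts v hv
    have e1 : SW η p v + SW η v p = ∑ τ : Equiv.Perm (Fin n), wt η τ :=
      SW_compl (ne_of_lt (hpk.trans h1))
    have e2 : SW η k v + SW η v k = ∑ τ : Equiv.Perm (Fin n), wt η τ :=
      SW_compl (ne_of_lt h1)
    have e3 : SW η v p ≤ SW η v k := SW_mono_left hη hpk h1
    linarith
  have hsum : 0 ≤ ∑ v ∈ V, (-SW η v p + (SW η v k + (SW η p v + -SW η k v))) :=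
    Finset.sum_nonneg hVterm
  have e : ∑ v ∈ V, (-SW η v p + (SW η v k + (SW η p v + -SW η k v)))
      = (∑ v ∈ V, -SW η v p) + ((∑ v ∈ V, SW η v k) + ∑ v ∈ V, (SW η p v + -SW η k v)) := by
    rw [Finset.sum_add_distrib, Finset.sum_add_distrib]
  linarith [hmain, hsum, e]


section Abstract
variable {ι : Type*} [Fintype ι] [DecidableEq ι] {D : ι → Type*} [∀ i, Fintype (D i)]
  [∀ i, Nonempty (D i)]

noncomputable def W (val : ∀ i, D i → ℕ) (t : ι → ℝ) (c : ∀ i, D i) : ℝ :=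
  ∏ i, Real.exp (-(t i) * (val i (c i)))

lemma W_pos (val : ∀ i, D i → ℕ) (t : ι → ℝ) (c : ∀ i, D i) : 0 < W val t c :=
  Finset.prod_pos (fun i _ => Real.exp_pos _)

noncomputable def RR (val : ∀ i, D i → ℕ) (t : ι → ℝ) (k : ι) (c : ∀ i, D i) : ℝ :=
  ∏ i ∈ Finset.univ.erase k, Real.exp (-(t i) * (val i (c i)))

lemma RR_pos (val : ∀ i, D i → ℕ) (t : ι → ℝ) (k : ι) (c : ∀ i, D i) : 0 < RR val t k c :=
  Finset.prod_pos (fun i _ => Real.exp_pos _)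

lemma RR_update (val : ∀ i, D i → ℕ) (t : ι → ℝ) (k : ι) (c : ∀ i, D i) (x : D k) :
    RR val t k (Function.update c k x) = RR val t k c := by
  unfold RR
  apply Finset.prod_congr rfl
  intro i hi
  rw [Function.update_of_ne (Finset.ne_of_mem_erase hi)]

lemma W_eq (val : ∀ i, D i → ℕ) (t t' : ι → ℝ) (k : ι) (hsame : ∀ i, i ≠ k → t' i = t i)
    (c : ∀ i, D i) :
    W val t' c = Real.exp (-(t' k) * (val k (c k))) * RR val t k c := by
  unfold W RR
  rw [← Finset.mul_prod_erase Finset.univ _ (Finset.mem_univ k)]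
  congr 1
  apply Finset.prod_congr rfl
  intro i hi
  rw [hsame i (Finset.ne_of_mem_erase hi)]

lemma step_ineq (val : ∀ i, D i → ℕ) (H : (∀ i, D i) → ℝ) (t t' : ι → ℝ) (k : ι)
    (hsame : ∀ i, i ≠ k → t' i = t i) (hk : t k ≤ t' k)
    (hH : ∀ (c : ∀ i, D i) (a b : D k), val k a ≤ val k b →
      H (Function.update c k a) ≤ H (Function.update c k b)) :
    (∑ c, W val t' c * H c) * (∑ c, W val t c) ≤
      (∑ c, W val t c * H c) * (∑ c, W val t' c) := by
  classical
  set w : (∀ i, D i) → ℝ := W val t with hw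
  set w' : (∀ i, D i) → ℝ := W val t' with hw'
  set F : ((∀ i, D i) × (∀ i, D i)) → ℝ := fun cd =>
    (H cd.1 - H cd.2) * (w cd.1 * w' cd.2 - w' cd.1 * w cd.2) with hF
  set Φ : ((∀ i, D i) × (∀ i, D i)) → ((∀ i, D i) × (∀ i, D i)) := fun cd =>
    (Function.update cd.1 k (cd.2 k), Function.update cd.2 k (cd.1 k)) with hΦ
  have hΦinv : Function.Involutive Φ := by
    intro cd
    simp only [hΦ, Function.update_self, Function.update_idem]
    rw [Function.update_eq_self, Function.update_eq_self]
  -- pointwise inequality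
  have hpoint : ∀ cd, 0 ≤ F cd + F (Φ cd) := by
    rintro ⟨c, d⟩
    have hwc : w c = Real.exp (-(t k) * (val k (c k))) * RR val t k c :=
      W_eq val t t k (fun _ _ => rfl) c
    have hw'c : w' c = Real.exp (-(t' k) * (val k (c k))) * RR val t k c :=
      W_eq val t t' k hsame c
    have hwd : w d = Real.exp (-(t k) * (val k (d k))) * RR val t k d :=
      W_eq val t t k (fun _ _ => rfl) d
    have hw'd : w' d = Real.exp (-(t' k) * (val k (d k))) * RR val t k d :=
      W_eq val t t' k hsame d
    have hwc2 : w (Function.update c k (d k)) =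
        Real.exp (-(t k) * (val k (d k))) * RR val t k c := by
      rw [hw, W_eq val t t k (fun _ _ => rfl), Function.update_self, RR_update]
    have hw'c2 : w' (Function.update c k (d k)) =
        Real.exp (-(t' k) * (val k (d k))) * RR val t k c := by
      rw [hw', W_eq val t t' k hsame, Function.update_self, RR_update]
    have hwd2 : w (Function.update d k (c k)) =
        Real.exp (-(t k) * (val k (c k))) * RR val t k d := by
      rw [hw, W_eq val t t k (fun _ _ => rfl), Function.update_self, RR_update]
    have hw'd2 : w' (Function.update d k (c k)) =
        Real.exp (-(t' k) * (val k (c k))) * RR val t k d := by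
      rw [hw', W_eq val t t' k hsame, Function.update_self, RR_update]
    set a := c k with ha
    set b := d k with hb
    set Ea := Real.exp (-(t k) * (val k a)) with hEa
    set Eb := Real.exp (-(t k) * (val k b)) with hEb
    set Ea' := Real.exp (-(t' k) * (val k a)) with hEa'
    set Eb' := Real.exp (-(t' k) * (val k b)) with hEb'
    set Rc := RR val t k c with hRc
    set Rd := RR val t k d with hRd
    have hXfact : F (c, d) + F (Φ (c, d)) =
        (Rc * Rd) * ((Ea * Eb' - Ea' * Eb) *
          ((H c - H d) - (H (Function.update c k b) - H (Function.update d k a)))) := by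
      simp only [hF, hΦ]
      rw [hwc, hw'c, hwd, hw'd, hwc2, hw'c2, hwd2, hw'd2]
      ring
    rw [hXfact]
    apply mul_nonneg (mul_pos (RR_pos val t k c) (RR_pos val t k d)).le
    rcases le_total (val k a) (val k b) with hab | hab
    · have hX : Ea * Eb' - Ea' * Eb ≤ 0 := by
        rw [hEa, hEb, hEa', hEb', ← Real.exp_add, ← Real.exp_add, sub_nonpos]
        apply Real.exp_le_exp.mpr
        have hcast : (val k a : ℝ) ≤ (val k b : ℝ) := Nat.cast_le.mpr hab
        nlinarith [hk, hcast]
      have hB : (H c - H d) - (H (Function.update c k b) - H (Function.update d k a)) ≤ 0 := by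
        have h1 : H c ≤ H (Function.update c k b) := by
          have := hH c a b hab
          rwa [ha, Function.update_eq_self] at this
        have h2 : H (Function.update d k a) ≤ H d := by
          have := hH d a b hab
          rwa [hb, Function.update_eq_self] at this
        linarith
      nlinarith [hX, hB]
    · have hX : 0 ≤ Ea * Eb' - Ea' * Eb := by
        rw [hEa, hEb, hEa', hEb', ← Real.exp_add, ← Real.exp_add, sub_nonneg]
        apply Real.exp_le_exp.mpr
        have hcast : (val k b : ℝ) ≤ (val k a : ℝ) := Nat.cast_le.mpr hab
        nlinarith [hk, hcast]
      have hB : 0 ≤ (H c - H d) - (H (Function.update c k b) - H (Function.update d k a)) := by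
        have h1 : H (Function.update c k b) ≤ H c := by
          have := hH c b a hab
          rwa [ha, Function.update_eq_self] at this
        have h2 : H d ≤ H (Function.update d k a) := by
          have := hH d b a hab
          rwa [hb, Function.update_eq_self] at this
        linarith
      exact mul_nonneg hX hB
  -- sum of F is nonneg
  have hFsum : 0 ≤ ∑ cd : ((∀ i, D i) × (∀ i, D i)), F cd := by
    have hcomp : ∑ cd : ((∀ i, D i) × (∀ i, D i)), F (Φ cd) =
        ∑ cd : ((∀ i, D i) × (∀ i, D i)), F cd :=
      Equiv.sum_comp hΦinv.toPerm F
    have h2 : 0 ≤ ∑ cd : ((∀ i, D i) × (∀ i, D i)), (F cd + F (Φ cd)) :=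
      Finset.sum_nonneg (fun cd _ => hpoint cd)
    rw [Finset.sum_add_distrib, hcomp] at h2
    linarith
  -- expand sum of F
  have hexpand : ∑ cd : ((∀ i, D i) × (∀ i, D i)), F cd =
      2 * ((∑ c, w c * H c) * (∑ c, w' c) - (∑ c, w' c * H c) * (∑ c, w c)) := by
    rw [Fintype.sum_prod_type]
    have hrow : ∀ c, ∑ d, F (c, d) =
        (w c * H c) * (∑ d, w' d) - (w' c * H c) * (∑ d, w d)
        - w c * (∑ d, w' d * H d) + w' c * (∑ d, w d * H d) := by
      intro c
      have : ∀ d, F (c, d) = (w c * H c) * w' d - (w' c * H c) * w d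
          - w c * (w' d * H d) + w' c * (w d * H d) := by
        intro d
        simp only [hF]
        ring
      rw [Finset.sum_congr rfl (fun d _ => this d)]
      rw [Finset.sum_add_distrib, Finset.sum_sub_distrib, Finset.sum_sub_distrib,
        ← Finset.mul_sum, ← Finset.mul_sum, ← Finset.mul_sum, ← Finset.mul_sum]
    rw [Finset.sum_congr rfl (fun c _ => hrow c)]
    rw [Finset.sum_add_distrib, Finset.sum_sub_distrib, Finset.sum_sub_distrib,
      ← Finset.sum_mul, ← Finset.sum_mul, ← Finset.sum_mul, ← Finset.sum_mul]
    ring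
  rw [hexpand] at hFsum
  linarith

lemma chain_ineq (val : ∀ i, D i → ℕ) (H : (∀ i, D i) → ℝ) (θ θ' : ℝ) (hle : θ ≤ θ')
    (hH : ∀ (k : ι) (c : ∀ i, D i) (a b : D k), val k a ≤ val k b →
      H (Function.update c k a) ≤ H (Function.update c k b)) :
    (∑ c, W val (fun _ => θ') c * H c) * (∑ c, W val (fun _ => θ) c) ≤
      (∑ c, W val (fun _ => θ) c * H c) * (∑ c, W val (fun _ => θ') c) := by
  classical
  have hNe : Nonempty (∀ i, D i) := ⟨fun i => Classical.arbitrary _⟩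
  have hpos : ∀ t : ι → ℝ, 0 < ∑ c, W val t c := by
    intro t
    apply Finset.sum_pos (fun c _ => W_pos val t c)
    exact Finset.univ_nonempty
  set ts : Finset ι → ι → ℝ := fun s i => if i ∈ s then θ' else θ with hts
  have key : ∀ s : Finset ι,
      (∑ c, W val (ts s) c * H c) * (∑ c, W val (fun _ => θ) c) ≤
      (∑ c, W val (fun _ => θ) c * H c) * (∑ c, W val (ts s) c) := by
    intro s
    induction s using Finset.induction_on with
    | empty =>
        have : ts ∅ = (fun _ => θ) := by
          funext i
          simp [hts]
        rw [this]
    | @insert k s hk ih =>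
        have e1 : ts s k = θ := by simp [hts, hk]
        have e2 : ts (insert k s) k = θ' := by simp [hts]
        have hsame : ∀ i, i ≠ k → ts (insert k s) i = ts s i := by
          intro i hik
          simp [hts, Finset.mem_insert, hik]
        have hstep := step_ineq val H (ts s) (ts (insert k s)) k hsame
          (by rw [e1, e2]; exact hle) (hH k)
        -- combine ratios
        have r1 : (∑ c, W val (ts (insert k s)) c * H c) / (∑ c, W val (ts (insert k s)) c) ≤
            (∑ c, W val (ts s) c * H c) / (∑ c, W val (ts s) c) :=
          (div_le_div_iff₀ (hpos _) (hpos _)).mpr hstep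
        have r2 : (∑ c, W val (ts s) c * H c) / (∑ c, W val (ts s) c) ≤
            (∑ c, W val (fun _ => θ) c * H c) / (∑ c, W val (fun _ => θ) c) :=
          (div_le_div_iff₀ (hpos _) (hpos _)).mpr ih
        exact (div_le_div_iff₀ (hpos _) (hpos _)).mp (r1.trans r2)
  have huniv := key Finset.univ
  have : ts Finset.univ = (fun _ => θ') := by
    funext i
    simp [hts]
  rwa [this] at huniv

end Abstract

lemma left_split (σ : Equiv.Perm (Fin n)) (k : Fin n) :
    k.val = (univ.filter (fun i : Fin n => i < k ∧ σ i < σ k)).card + lcodeNat σ k := by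
  classical
  have hcard : (univ.filter (fun i : Fin n => i < k)).card = k.val := by
    have h : univ.filter (fun i : Fin n => i < k) = Finset.Iio k := by
      ext i; simp
    rw [h, Fin.card_Iio]
  have hsplit : (univ.filter (fun i : Fin n => i < k)) =
      (univ.filter (fun i : Fin n => i < k ∧ σ i < σ k)) ∪
      (univ.filter (fun i : Fin n => i < k ∧ σ k < σ i)) := by
    ext i
    simp only [mem_filter, mem_univ, true_and, mem_union]
    constructor
    · intro h
      have hne : σ i ≠ σ k := fun he => (ne_of_lt h) (σ.injective he)
      rcases lt_or_gt_of_ne hne with hc | hc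
      · exact Or.inl ⟨h, hc⟩
      · exact Or.inr ⟨h, hc⟩
    · rintro (⟨h, _⟩ | ⟨h, _⟩) <;> exact h
  have hd : Disjoint (univ.filter (fun i : Fin n => i < k ∧ σ i < σ k))
      (univ.filter (fun i : Fin n => i < k ∧ σ k < σ i)) := by
    rw [Finset.disjoint_left]
    intro i h1 h2
    simp only [mem_filter, mem_univ, true_and] at h1 h2
    exact absurd (h1.2.trans h2.2) (lt_irrefl _)
  rw [← hcard, hsplit, Finset.card_union_of_disjoint hd]
  rfl

lemma Hmono_succ {η : ℝ} (hη : 0 ≤ η) (σ : Equiv.Perm (Fin n)) (k : Fin n)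
    (hlt : lcodeNat σ k < k.val) :
    ∃ σ' : Equiv.Perm (Fin n),
      lcode σ' = Function.update (lcode σ) k
        ⟨lcodeNat σ k + 1, Nat.succ_lt_succ hlt⟩ ∧ G0 η σ ≤ G0 η σ' := by
  classical
  set LS := univ.filter (fun i : Fin n => i < k ∧ σ i < σ k) with hLS
  have hne : LS.Nonempty := by
    rw [← Finset.card_pos, hLS]
    have := left_split σ k
    omega
  obtain ⟨p, hpLS, hpmax⟩ := Finset.exists_max_image LS (fun i => σ i) hne
  have hpk : p < k := by
    have := hpLS; simp only [hLS, mem_filter, mem_univ, true_and] at this; exact this.1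
  have hval : σ p < σ k := by
    have := hpLS; simp only [hLS, mem_filter, mem_univ, true_and] at this; exact this.2
  have hmax : ∀ m, m < k → ¬(σ p < σ m ∧ σ m < σ k) := by
    intro m hm hcon
    have hmem : m ∈ LS := by simp only [hLS, mem_filter, mem_univ, true_and]; exact ⟨hm, hcon.2⟩
    exact absurd (hpmax m hmem) (not_le.mpr hcon.1)
  refine ⟨σ * Equiv.swap p k, ?_, move_G0_le hη σ hpk hval hmax⟩
  funext m
  by_cases hm : m = k
  · subst hm
    rw [Function.update_self]
    apply Fin.ext
    exact move_lcode_eq σ hpk hval hmax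
  · rw [Function.update_of_ne hm]
    apply Fin.ext
    exact move_lcode_ne σ hpk hval hmax hm

lemma Hmono {η : ℝ} (hη : 0 ≤ η) (k : Fin n) (c : ∀ j : Fin n, Fin (j.val + 1))
    (a b : Fin (k.val + 1)) (hab : a.val ≤ b.val) :
    G0 η (codeEquiv.symm (Function.update c k a)) ≤
      G0 η (codeEquiv.symm (Function.update c k b)) := by
  classical
  suffices h : ∀ m : ℕ, ∀ a b : Fin (k.val + 1), a.val + m = b.val →
      G0 η (codeEquiv.symm (Function.update c k a)) ≤
      G0 η (codeEquiv.symm (Function.update c k b)) by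
    exact h (b.val - a.val) a b (by omega)
  intro m
  induction m with
  | zero =>
      intro a b hab
      have : a = b := Fin.ext (by omega)
      rw [this]
  | succ m ih =>
      intro a b hab
      have hbk : b.val ≤ k.val := Nat.lt_succ_iff.mp b.isLt
      have ha1 : a.val + 1 < k.val + 1 := by omega
      set a1 : Fin (k.val + 1) := ⟨a.val + 1, ha1⟩ with ha1def
      set σ := codeEquiv.symm (Function.update c k a) with hσ
      have hlc : lcode σ = Function.update c k a := by
        have := codeEquiv.apply_symm_apply (Function.update c k a)
        exact this
      have hlk : lcodeNat σ k = a.val := by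
        have := congrArg (fun f => (f k : Fin (k.val + 1)).val) hlc
        simpa [Function.update_self, lcode] using this
      have hlt : lcodeNat σ k < k.val := by omega
      obtain ⟨σ', hcode', hle'⟩ := Hmono_succ hη σ k hlt
      have hσ'c : lcode σ' = Function.update c k a1 := by
        rw [hcode', hlc, Function.update_idem]
        exact congrArg (fun z => Function.update c k z)
          (Fin.ext (by show lcodeNat σ k + 1 = a.val + 1; rw [hlk]))
      have hσ' : σ' = codeEquiv.symm (Function.update c k a1) := by
        rw [← hσ'c]
        exact (codeEquiv.symm_apply_apply σ').symm
      calc G0 η (codeEquiv.symm (Function.update c k a)) = G0 η σ := by rw [hσ]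
        _ ≤ G0 η σ' := hle'
        _ = G0 η (codeEquiv.symm (Function.update c k a1)) := by rw [hσ']
        _ ≤ _ := ih a1 b (by simp only [ha1def]; omega)

lemma wt_eq_W (t : ℝ) (σ : Equiv.Perm (Fin n)) :
    wt t σ = W (D := fun k : Fin n => Fin (k.val + 1)) (fun k x => x.val) (fun _ => t)
      (codeEquiv σ) := by
  unfold wt W
  rw [inv_eq_sum_lcode]
  rw [show codeEquiv (n := n) σ = lcode σ from rfl]
  rw [← Real.exp_sum]
  congr 1
  rw [Nat.cast_sum, Finset.mul_sum]
  apply Finset.sum_congr rfl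
  intro i _
  rfl

lemma core_ineq (θ θ' η : ℝ) (hle : θ ≤ θ') (hη : 0 ≤ η) :
    (∑ σ : Equiv.Perm (Fin n), wt θ' σ * G0 η σ) * (∑ σ : Equiv.Perm (Fin n), wt θ σ) ≤
      (∑ σ : Equiv.Perm (Fin n), wt θ σ * G0 η σ) * (∑ σ : Equiv.Perm (Fin n), wt θ' σ) := by
  classical
  have tr1 : ∀ t : ℝ, (∑ σ : Equiv.Perm (Fin n), wt t σ * G0 η σ) =
      ∑ c : ∀ k : Fin n, Fin (k.val + 1),
        W (fun k x => x.val) (fun _ => t) c * G0 η (codeEquiv.symm c) := by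
    intro t
    apply Fintype.sum_equiv codeEquiv
    intro σ
    rw [wt_eq_W, codeEquiv.symm_apply_apply]
  have tr2 : ∀ t : ℝ, (∑ σ : Equiv.Perm (Fin n), wt t σ) =
      ∑ c : ∀ k : Fin n, Fin (k.val + 1), W (fun k x => x.val) (fun _ => t) c := by
    intro t
    apply Fintype.sum_equiv codeEquiv
    intro σ
    rw [wt_eq_W]
  rw [tr1, tr1, tr2, tr2]
  exact chain_ineq (D := fun k : Fin n => Fin (k.val + 1)) (fun k x => x.val)
    (fun c => G0 η (codeEquiv.symm c)) θ θ' hle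
    (fun k c a b hab => Hmono hη k c a b hab)


lemma kendall_center (σ₀ ρ : Equiv.Perm (Fin n)) : kendall n (ρ * σ₀) σ₀ = inv ρ := by
  have h := kendall_mul_right ρ 1 σ₀
  rw [one_mul] at h
  rw [h, kendall_one]

lemma Zeq (t : ℝ) (σ₀ : Equiv.Perm (Fin n)) :
    (∑ π : Equiv.Perm (Fin n), Real.exp (-t * (kendall n π σ₀ : ℝ))) =
      ∑ ρ : Equiv.Perm (Fin n), wt t ρ := by
  apply Fintype.sum_equiv (Equiv.mulRight σ₀⁻¹)
  intro x
  simp only [Equiv.coe_mulRight]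
  unfold wt
  congr 2
  have h := kendall_mul_right (x * σ₀⁻¹) 1 σ₀
  rw [one_mul, inv_mul_cancel_right] at h
  rw [h, kendall_one]

lemma mallows_eq (t : ℝ) (σ₀ ρ : Equiv.Perm (Fin n)) :
    mallows n t σ₀ (ρ * σ₀) = wt t ρ / (∑ x : Equiv.Perm (Fin n), wt t x) := by
  unfold mallows
  rw [Zeq t σ₀, kendall_center σ₀ ρ]
  rfl

theorem main_ineq (θ θ' η : ℝ)
    (hle : θ ≤ θ') (hη : 0 < η) (σ₀ : Equiv.Perm (Fin n)) :
    (∑ σ : Equiv.Perm (Fin n), ∑ τ : Equiv.Perm (Fin n),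
        mallows n θ' σ₀ σ * mallows n η σ₀ τ * kendall n σ τ) ≤
      ∑ σ : Equiv.Perm (Fin n), ∑ τ : Equiv.Perm (Fin n),
        mallows n θ σ₀ σ * mallows n η σ₀ τ * kendall n σ τ := by
  classical
  have hZpos : ∀ t : ℝ, 0 < ∑ ρ : Equiv.Perm (Fin n), wt t ρ := fun t =>
    Finset.sum_pos (fun ρ _ => wt_pos t ρ) ⟨1, mem_univ 1⟩
  have key : ∀ t : ℝ, (∑ σ : Equiv.Perm (Fin n), ∑ τ : Equiv.Perm (Fin n),
      mallows n t σ₀ σ * mallows n η σ₀ τ * kendall n σ τ)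
      = (∑ ρ : Equiv.Perm (Fin n), wt t ρ * G0 η ρ) /
        ((∑ ρ : Equiv.Perm (Fin n), wt t ρ) * (∑ ρ : Equiv.Perm (Fin n), wt η ρ)) := by
    intro t
    have step1 : (∑ ρ : Equiv.Perm (Fin n), ∑ π : Equiv.Perm (Fin n),
          mallows n t σ₀ (ρ * σ₀) * mallows n η σ₀ (π * σ₀) * kendall n (ρ * σ₀) (π * σ₀))
        = ∑ σ : Equiv.Perm (Fin n), ∑ τ : Equiv.Perm (Fin n),
          mallows n t σ₀ σ * mallows n η σ₀ τ * kendall n σ τ := by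
      apply Fintype.sum_equiv (Equiv.mulRight σ₀)
        (fun ρ => ∑ π : Equiv.Perm (Fin n),
          mallows n t σ₀ (ρ * σ₀) * mallows n η σ₀ (π * σ₀) * kendall n (ρ * σ₀) (π * σ₀))
        (fun σ => ∑ τ : Equiv.Perm (Fin n),
          mallows n t σ₀ σ * mallows n η σ₀ τ * kendall n σ τ)
      intro ρ
      apply Fintype.sum_equiv (Equiv.mulRight σ₀)
      intro π
      rfl
    rw [← step1]
    have step2 : ∀ ρ π : Equiv.Perm (Fin n),
        mallows n t σ₀ (ρ * σ₀) * mallows n η σ₀ (π * σ₀) * (kendall n (ρ * σ₀) (π * σ₀) : ℝ)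
        = (wt t ρ * (wt η π * (K ρ π : ℝ))) /
          ((∑ x : Equiv.Perm (Fin n), wt t x) * (∑ x : Equiv.Perm (Fin n), wt η x)) := by
      intro ρ π
      rw [mallows_eq, mallows_eq, kendall_mul_right, kendall_eq_K]
      ring
    calc ∑ ρ : Equiv.Perm (Fin n), ∑ π : Equiv.Perm (Fin n),
          mallows n t σ₀ (ρ * σ₀) * mallows n η σ₀ (π * σ₀) * kendall n (ρ * σ₀) (π * σ₀)
        = ∑ ρ : Equiv.Perm (Fin n), (wt t ρ * G0 η ρ) /
            ((∑ x : Equiv.Perm (Fin n), wt t x) * (∑ x : Equiv.Perm (Fin n), wt η x)) := by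
          apply Finset.sum_congr rfl
          intro ρ _
          rw [Finset.sum_congr rfl (fun π _ => step2 ρ π)]
          rw [← Finset.sum_div, ← Finset.mul_sum]
          rfl
      _ = _ := by rw [← Finset.sum_div]
  rw [key θ, key θ']
  rw [div_le_div_iff₀ (mul_pos (hZpos θ') (hZpos η)) (mul_pos (hZpos θ) (hZpos η))]
  have hcore := core_ineq (n := n) θ θ' η hle hη.le
  have h2 := mul_le_mul_of_nonneg_right hcore (hZpos η).le
  ring_nf at h2 ⊢
  linarith [h2]


end MP

/-- Monotonicity of the expected pairwise Kendall distance in the dispersion parameter: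
for `θ ≤ θ'` and an independent `τ ~ M(σ₀,θ'')`,
`E[d(σ_{θ'}, τ)] ≤ E[d(σ_θ, τ)]`. -/
theorem expected_pairwise_distance_antitone (n : ℕ) (θ θ' θ'' : ℝ) (hθ : 0 < θ)
    (hle : θ ≤ θ') (hθ'' : 0 < θ'') (σ₀ : Equiv.Perm (Fin n)) :
    (∑ σ : Equiv.Perm (Fin n), ∑ τ : Equiv.Perm (Fin n),
        mallows n θ' σ₀ σ * mallows n θ'' σ₀ τ * kendall n σ τ) ≤
      ∑ σ : Equiv.Perm (Fin n), ∑ τ : Equiv.Perm (Fin n),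
        mallows n θ σ₀ σ * mallows n θ'' σ₀ τ * kendall n σ τ :=
  MP.main_ineq θ θ' θ'' hle hθ'' σ₀
end

section
/- Let a mixture of two concentric Mallows models M(σ_0, θ_g) and M(σ_0, θ_b) with mixture weight r ∈ [0,1] on the expert component satisfy E[d(β, σ_0)] ≥ c · E[d(γ, σ_0)] for some c ≥ 2, where γ ~ M(σ_0,θ_g), β ~ M(σ_0,θ_b). For a random permutation σ from the mixture, define δ_σ = E_{σ'~mixture}[d(σ, σ')]. Then E[δ_β] − E[δ_γ] ≥ (c−2)·r·E[d(γ, σ_0)] (up to constant factors), i.e., the expected mean distance of a non-expert ranking exceeds that of an expert ranking by at least a positive quantity of order c·r·E[d(γ,σ_0)]. -/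
open Finset

/-- Expected mean distance (to an independent draw of the mixture) of a random ranking
from the mixture `r·M(σ₀,θ_g) + (1−r)·M(σ₀,θ_b)`, for a ranking drawn from `M(σ₀,θ)`. -/
noncomputable def meanDistMix (n : ℕ) (θg θb r θ : ℝ) (σ₀ : Equiv.Perm (Fin n)) : ℝ :=
  ∑ σ : Equiv.Perm (Fin n), mallows n θ σ₀ σ *
    ∑ σ' : Equiv.Perm (Fin n),
      (r * mallows n θg σ₀ σ' + (1 - r) * mallows n θb σ₀ σ') * kendall n σ σ'

namespace MMS
open Equiv

variable {n : ℕ}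

/-- kendall as sum of indicators over ordered pairs -/
lemma kendall_eq_sum (σ π : Equiv.Perm (Fin n)) :
    kendall n σ π = ∑ p : Fin n × Fin n,
      (if p.1 < p.2 ∧ ((σ p.1 < σ p.2 ∧ π p.2 < π p.1) ∨ (σ p.2 < σ p.1 ∧ π p.1 < π p.2))
       then 1 else 0) := by
  rw [kendall, Finset.card_filter]

/-- alternative form without the `p.1 < p.2` constraint -/
def K2 (σ π : Equiv.Perm (Fin n)) : ℕ :=
  ∑ p : Fin n × Fin n, (if σ p.1 < σ p.2 ∧ π p.2 < π p.1 then 1 else 0)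

lemma kendall_eq_K2 (σ π : Equiv.Perm (Fin n)) : kendall n σ π = K2 σ π := by
  rw [kendall, K2, ← Finset.card_filter]
  apply Finset.card_nbij' (i := fun p => if σ p.1 < σ p.2 then p else p.swap)
    (j := fun p => if p.1 < p.2 then p else p.swap)
  · intro a ha
    simp only [Finset.mem_coe, mem_filter, mem_univ, true_and] at ha ⊢
    obtain ⟨h12, hd⟩ := ha
    rcases hd with ⟨h1, h2⟩ | ⟨h1, h2⟩
    · rw [if_pos h1]; exact ⟨h1, h2⟩
    · rw [if_neg (asymm h1)]; exact ⟨h1, h2⟩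
  · intro b hb
    simp only [Finset.mem_coe, mem_filter, mem_univ, true_and] at hb ⊢
    obtain ⟨h1, h2⟩ := hb
    have hne : b.1 ≠ b.2 := fun h => absurd h1 (by rw [h]; exact lt_irrefl _)
    rcases lt_or_gt_of_ne hne with h | h
    · rw [if_pos h]; exact ⟨h, Or.inl ⟨h1, h2⟩⟩
    · rw [if_neg (asymm h)]; exact ⟨h, Or.inr ⟨h1, h2⟩⟩
  · intro a ha
    simp only [Finset.mem_coe, mem_filter, mem_univ, true_and] at ha
    dsimp only
    obtain ⟨h12, hd⟩ := ha
    rcases hd with ⟨h1, h2⟩ | ⟨h1, h2⟩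
    · rw [if_pos h1, if_pos h12]
    · rw [if_neg (asymm h1)]
      have : ¬ (a.swap.1 < a.swap.2) := asymm h12
      rw [if_neg this, Prod.swap_swap]
  · intro b hb
    simp only [Finset.mem_coe, mem_filter, mem_univ, true_and] at hb
    dsimp only
    obtain ⟨h1, h2⟩ := hb
    by_cases h : b.1 < b.2
    · rw [if_pos h, if_pos h1]
    · rw [if_neg h]
      have : ¬ (σ b.swap.1 < σ b.swap.2) := asymm h1
      rw [if_neg this, Prod.swap_swap]

lemma K2_right_invariant (σ π ρ : Equiv.Perm (Fin n)) : K2 (σ * ρ) (π * ρ) = K2 σ π := by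
  rw [K2, K2]
  rw [← Equiv.sum_comp (Equiv.prodCongr ρ ρ)
    (fun p : Fin n × Fin n => if σ p.1 < σ p.2 ∧ π p.2 < π p.1 then (1:ℕ) else 0)]
  apply Finset.sum_congr rfl
  intro p _
  simp [Equiv.Perm.mul_apply]
  exact if_congr Iff.rfl rfl rfl

lemma kendall_mul_right (ρ σ₀ : Equiv.Perm (Fin n)) :
    kendall n (ρ * σ₀) σ₀ = kendall n ρ 1 := by
  rw [kendall_eq_K2, kendall_eq_K2]
  have := K2_right_invariant ρ 1 σ₀
  rwa [one_mul] at this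

/-- identity-centered kendall = inversions, double-sum form -/
lemma kendall_one (σ : Equiv.Perm (Fin n)) :
    kendall n σ 1 = ∑ p1 : Fin n, ∑ p2 : Fin n, (if p1 < p2 ∧ σ p2 < σ p1 then 1 else 0) := by
  rw [kendall_eq_sum, Fintype.sum_prod_type]
  apply Finset.sum_congr rfl; intro p1 _
  apply Finset.sum_congr rfl; intro p2 _
  apply if_congr _ rfl rfl
  simp only [Equiv.Perm.coe_one, id_eq]
  constructor
  · rintro ⟨h, ⟨h1, h2⟩ | ⟨h1, h2⟩⟩
    · exact absurd h (asymm h2)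
    · exact ⟨h, h1⟩
  · rintro ⟨h, h2⟩
    exact ⟨h, Or.inr ⟨h2, h⟩⟩


variable {n : ℕ}

/-- insert value `p` at front -/
def frontB (p : Fin (n+1)) (τ : Equiv.Perm (Fin n)) : Equiv.Perm (Fin (n+1)) :=
  (finSuccEquiv' (0 : Fin (n+1))).trans ((Equiv.optionCongr τ).trans (finSuccEquiv' p).symm)

@[simp] lemma frontB_zero (p : Fin (n+1)) (τ : Equiv.Perm (Fin n)) : frontB p τ 0 = p := by
  simp [frontB, finSuccEquiv'_at]

@[simp] lemma frontB_succ (p : Fin (n+1)) (τ : Equiv.Perm (Fin n)) (i : Fin n) :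
    frontB p τ i.succ = p.succAbove (τ i) := by
  have h0 : (finSuccEquiv' (0 : Fin (n+1))) i.succ = some i := by
    have h : (0 : Fin (n+1)).succAbove i = i.succ := congrFun Fin.succAbove_zero i
    rw [← h]; exact finSuccEquiv'_succAbove 0 i
  show (finSuccEquiv' p).symm (Equiv.optionCongr τ ((finSuccEquiv' (0 : Fin (n+1))) i.succ)) = _
  rw [h0, Equiv.optionCongr_apply, Option.map_some, finSuccEquiv'_symm_some]

lemma frontB_bij :
    Function.Bijective (fun pt : Fin (n+1) × Equiv.Perm (Fin n) => frontB pt.1 pt.2) := by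
  rw [Fintype.bijective_iff_injective_and_card]
  constructor
  · rintro ⟨p, τ⟩ ⟨p', τ'⟩ h
    simp only at h
    have hp : p = p' := by
      have := congrArg (fun e : Equiv.Perm (Fin (n+1)) => e 0) h
      simpa using this
    subst hp
    have hτ : τ = τ' := by
      apply Equiv.ext; intro i
      have := congrArg (fun e : Equiv.Perm (Fin (n+1)) => e i.succ) h
      simp only [frontB_succ] at this
      exact Fin.succAbove_right_injective this
    rw [hτ]
  · simp [Fintype.card_perm, Nat.factorial_succ]

/-- insert value `w` at back -/
def backB (w : Fin (n+1)) (τ : Equiv.Perm (Fin n)) : Equiv.Perm (Fin (n+1)) :=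
  (finSuccEquiv' (Fin.last n)).trans ((Equiv.optionCongr τ).trans (finSuccEquiv' w).symm)

@[simp] lemma backB_last (w : Fin (n+1)) (τ : Equiv.Perm (Fin n)) : backB w τ (Fin.last n) = w := by
  simp [backB, finSuccEquiv'_at]

@[simp] lemma backB_castSucc (w : Fin (n+1)) (τ : Equiv.Perm (Fin n)) (i : Fin n) :
    backB w τ i.castSucc = w.succAbove (τ i) := by
  have h0 : (finSuccEquiv' (Fin.last n)) i.castSucc = some i := by
    have h : (Fin.last n).succAbove i = i.castSucc := congrFun Fin.succAbove_last i
    rw [← h]; exact finSuccEquiv'_succAbove _ i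
  show (finSuccEquiv' w).symm (Equiv.optionCongr τ ((finSuccEquiv' (Fin.last n)) i.castSucc)) = _
  rw [h0, Equiv.optionCongr_apply, Option.map_some, finSuccEquiv'_symm_some]

lemma backB_bij :
    Function.Bijective (fun pt : Fin (n+1) × Equiv.Perm (Fin n) => backB pt.1 pt.2) := by
  rw [Fintype.bijective_iff_injective_and_card]
  constructor
  · rintro ⟨p, τ⟩ ⟨p', τ'⟩ h
    simp only at h
    have hp : p = p' := by
      have := congrArg (fun e : Equiv.Perm (Fin (n+1)) => e (Fin.last n)) h
      simpa using this
    subst hp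
    have hτ : τ = τ' := by
      apply Equiv.ext; intro i
      have := congrArg (fun e : Equiv.Perm (Fin (n+1)) => e i.castSucc) h
      simp only [backB_castSucc] at this
      exact Fin.succAbove_right_injective this
    rw [hτ]
  · simp [Fintype.card_perm, Nat.factorial_succ]

/-- counting helpers -/
lemma count_lt (τ : Equiv.Perm (Fin n)) (k : ℕ) (hk : k ≤ n) :
    ∑ i : Fin n, (if ((τ i : ℕ) < k) then (1:ℕ) else 0) = k := by
  rw [Equiv.sum_comp τ (fun v : Fin n => if (v : ℕ) < k then (1:ℕ) else 0)]
  rw [Fin.sum_univ_eq_sum_range (fun m => if m < k then (1:ℕ) else 0)]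
  rw [← Finset.card_filter]
  have : (Finset.range n).filter (fun m => m < k) = Finset.range k := by
    ext m; simp; omega
  rw [this, Finset.card_range]

lemma count_ge (τ : Equiv.Perm (Fin n)) (k : ℕ) :
    ∑ i : Fin n, (if (k ≤ (τ i : ℕ)) then (1:ℕ) else 0) = n - k := by
  rw [Equiv.sum_comp τ (fun v : Fin n => if k ≤ (v : ℕ) then (1:ℕ) else 0)]
  rw [Fin.sum_univ_eq_sum_range (fun m => if k ≤ m then (1:ℕ) else 0)]
  rw [← Finset.card_filter]
  have : (Finset.range n).filter (fun m => k ≤ m) = Finset.Ico k n ∪ ∅ := by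
    ext m; simp [Finset.mem_Ico]; omega
  rw [this, Finset.union_empty, Nat.card_Ico]


lemma inv_frontB (p : Fin (n+1)) (τ : Equiv.Perm (Fin n)) :
    kendall (n+1) (frontB p τ) 1 = (p : ℕ) + kendall n τ 1 := by
  rw [kendall_one, kendall_one]
  rw [Fin.sum_univ_succ
    (f := fun p1 : Fin (n+1) => ∑ p2 : Fin (n+1),
      (if p1 < p2 ∧ frontB p τ p2 < frontB p τ p1 then 1 else 0))]
  have hzero : ∑ p2 : Fin (n+1), (if (0:Fin (n+1)) < p2 ∧ frontB p τ p2 < frontB p τ 0 then 1 else 0)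
      = (p : ℕ) := by
    rw [Fin.sum_univ_succ]
    rw [if_neg (fun h => absurd h.1 (lt_irrefl _)), zero_add]
    rw [← count_lt τ (p : ℕ) (by omega)]
    apply Finset.sum_congr rfl; intro q _
    apply if_congr _ rfl rfl
    constructor
    · rintro ⟨-, h2⟩
      rw [frontB_succ, frontB_zero] at h2
      have := (Fin.succAbove_lt_iff_castSucc_lt p (τ q)).mp h2
      simpa [Fin.lt_iff_val_lt_val] using this
    · intro h
      refine ⟨Fin.succ_pos q, ?_⟩
      rw [frontB_succ, frontB_zero]
      apply (Fin.succAbove_lt_iff_castSucc_lt p (τ q)).mpr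
      simpa [Fin.lt_iff_val_lt_val] using h
  rw [hzero]
  congr 1
  apply Finset.sum_congr rfl; intro q1 _
  rw [Fin.sum_univ_succ]
  rw [if_neg (fun h => absurd h.1 (by simp [Fin.lt_iff_val_lt_val])), zero_add]
  apply Finset.sum_congr rfl; intro q2 _
  apply if_congr _ rfl rfl
  rw [frontB_succ, frontB_succ, Fin.succ_lt_succ_iff, Fin.succAbove_lt_succAbove_iff]

lemma inv_backB (w : Fin (n+1)) (τ : Equiv.Perm (Fin n)) :
    kendall (n+1) (backB w τ) 1 = (n - (w : ℕ)) + kendall n τ 1 := by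
  rw [kendall_one, kendall_one]
  rw [Fin.sum_univ_castSucc
    (f := fun p1 : Fin (n+1) => ∑ p2 : Fin (n+1),
      (if p1 < p2 ∧ backB w τ p2 < backB w τ p1 then 1 else 0))]
  have hlast : ∑ p2 : Fin (n+1), (if Fin.last n < p2 ∧ backB w τ p2 < backB w τ (Fin.last n) then 1 else 0) = 0 := by
    apply Finset.sum_eq_zero; intro p2 _
    rw [if_neg]
    rintro ⟨h, -⟩
    exact absurd h (not_lt.mpr (Fin.le_last p2))
  rw [hlast, add_zero]
  have hsplit : ∀ q1 : Fin n,
      (∑ p2 : Fin (n+1), (if q1.castSucc < p2 ∧ backB w τ p2 < backB w τ q1.castSucc then 1 else 0))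
      = (if (w:ℕ) ≤ (τ q1 : ℕ) then 1 else 0) + ∑ q2 : Fin n, (if q1 < q2 ∧ τ q2 < τ q1 then 1 else 0) := by
    intro q1
    rw [Fin.sum_univ_castSucc
      (f := fun p2 : Fin (n+1) => (if q1.castSucc < p2 ∧ backB w τ p2 < backB w τ q1.castSucc then 1 else 0))]
    rw [add_comm]
    congr 1
    · rw [backB_last, backB_castSucc]
      apply if_congr _ rfl rfl
      constructor
      · rintro ⟨-, h2⟩
        have := (Fin.lt_succAbove_iff_le_castSucc w (τ q1)).mp h2
        simpa [Fin.le_iff_val_le_val] using this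
      · intro h
        refine ⟨Fin.castSucc_lt_last q1, ?_⟩
        apply (Fin.lt_succAbove_iff_le_castSucc w (τ q1)).mpr
        simpa [Fin.le_iff_val_le_val] using h
    · apply Finset.sum_congr rfl; intro q2 _
      apply if_congr _ rfl rfl
      rw [backB_castSucc, backB_castSucc, Fin.castSucc_lt_castSucc_iff, Fin.succAbove_lt_succAbove_iff]
  calc ∑ q1 : Fin n, (∑ p2 : Fin (n+1), (if q1.castSucc < p2 ∧ backB w τ p2 < backB w τ q1.castSucc then 1 else 0))
      = ∑ q1 : Fin n, ((if (w:ℕ) ≤ (τ q1 : ℕ) then 1 else 0) + ∑ q2 : Fin n, (if q1 < q2 ∧ τ q2 < τ q1 then 1 else 0)) := by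
        apply Finset.sum_congr rfl; intro q1 _; exact hsplit q1
    _ = (n - (w:ℕ)) + ∑ q1 : Fin n, ∑ q2 : Fin n, (if q1 < q2 ∧ τ q2 < τ q1 then 1 else 0) := by
        rw [Finset.sum_add_distrib, count_ge τ (w:ℕ)]

noncomputable def W (n : ℕ) (θ : ℝ) (i j : Fin n) : ℝ :=
  ∑ σ : Equiv.Perm (Fin n), if σ i < σ j then Real.exp (-θ * (kendall n σ 1 : ℝ)) else 0

lemma W_nonneg (θ : ℝ) (i j : Fin n) : 0 ≤ W n θ i j := by
  apply Finset.sum_nonneg; intro σ _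
  split
  · exact (Real.exp_pos _).le
  · exact le_rfl

lemma W_front (θ : ℝ) (i j : Fin n) :
    W (n+1) θ i.succ j.succ
      = (∑ p : Fin (n+1), Real.exp (-θ * ((p:ℕ):ℝ))) * W n θ i j := by
  rw [W, ← Fintype.sum_bijective _ frontB_bij
      (fun pt : Fin (n+1) × Equiv.Perm (Fin n) =>
        if (frontB pt.1 pt.2) i.succ < (frontB pt.1 pt.2) j.succ
        then Real.exp (-θ * (kendall (n+1) (frontB pt.1 pt.2) 1 : ℝ)) else 0)
      _ (fun pt => rfl)]
  rw [Fintype.sum_prod_type, W, Finset.sum_mul]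
  apply Finset.sum_congr rfl; intro p _
  rw [Finset.mul_sum]
  apply Finset.sum_congr rfl; intro τ _
  rw [frontB_succ, frontB_succ, inv_frontB]
  by_cases h : τ i < τ j
  · rw [if_pos (Fin.succAbove_lt_succAbove_iff.mpr h), if_pos h, ← Real.exp_add]
    congr 1
    push_cast
    ring
  · rw [if_neg (fun hh => h (Fin.succAbove_lt_succAbove_iff.mp hh)), if_neg h, mul_zero]

lemma W_back (θ : ℝ) (i j : Fin n) :
    W (n+1) θ i.castSucc j.castSucc
      = (∑ w : Fin (n+1), Real.exp (-θ * ((n:ℝ) - ((w:ℕ):ℝ)))) * W n θ i j := by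
  rw [W, ← Fintype.sum_bijective _ backB_bij
      (fun pt : Fin (n+1) × Equiv.Perm (Fin n) =>
        if (backB pt.1 pt.2) i.castSucc < (backB pt.1 pt.2) j.castSucc
        then Real.exp (-θ * (kendall (n+1) (backB pt.1 pt.2) 1 : ℝ)) else 0)
      _ (fun pt => rfl)]
  rw [Fintype.sum_prod_type, W, Finset.sum_mul]
  apply Finset.sum_congr rfl; intro w _
  rw [Finset.mul_sum]
  apply Finset.sum_congr rfl; intro τ _
  rw [backB_castSucc, backB_castSucc, inv_backB]
  by_cases h : τ i < τ j
  · rw [if_pos (Fin.succAbove_lt_succAbove_iff.mpr h), if_pos h, ← Real.exp_add]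
    congr 1
    push_cast [Nat.cast_sub (Fin.is_le w)]
    ring
  · rw [if_neg (fun hh => h (Fin.succAbove_lt_succAbove_iff.mp hh)), if_neg h, mul_zero]

/-- the per-pair exponent for the extreme pair -/
def EE (n : ℕ) (x : Fin (n+2) × Fin (n+1)) : ℝ := ((x.1:ℕ):ℝ) + ((n:ℝ) - ((x.2:ℕ):ℝ))

noncomputable def SA (n : ℕ) (θ : ℝ) : ℝ :=
  ∑ x : Fin (n+2) × Fin (n+1), if (x.1:ℕ) ≤ (x.2:ℕ) then Real.exp (-θ * EE n x) else 0

noncomputable def SB (n : ℕ) (θ : ℝ) : ℝ :=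
  ∑ x : Fin (n+2) × Fin (n+1), if (x.2:ℕ) < (x.1:ℕ) then Real.exp (-θ * EE n x) else 0

noncomputable def ZP (n : ℕ) (θ : ℝ) : ℝ :=
  ∑ μ : Equiv.Perm (Fin n), Real.exp (-θ * (kendall n μ 1 : ℝ))

lemma ZP_nonneg (θ : ℝ) : 0 ≤ ZP n θ :=
  Finset.sum_nonneg (fun μ _ => (Real.exp_pos _).le)

lemma last_eq_succ_last : (Fin.last n).succ = Fin.last (n+1) := by
  apply Fin.ext; simp

lemma W_ext_A (θ : ℝ) : W (n+2) θ 0 (Fin.last (n+1)) = SA n θ * ZP n θ := by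
  rw [W, ← Fintype.sum_bijective _ frontB_bij
      (fun pt : Fin (n+2) × Equiv.Perm (Fin (n+1)) =>
        if (frontB pt.1 pt.2) 0 < (frontB pt.1 pt.2) (Fin.last (n+1))
        then Real.exp (-θ * (kendall (n+2) (frontB pt.1 pt.2) 1 : ℝ)) else 0)
      _ (fun pt => rfl)]
  rw [Fintype.sum_prod_type, SA, Fintype.sum_prod_type, Finset.sum_mul]
  apply Finset.sum_congr rfl; intro p _
  rw [← Fintype.sum_bijective _ backB_bij
      (fun vm : Fin (n+1) × Equiv.Perm (Fin n) =>
        if (frontB p (backB vm.1 vm.2)) 0 < (frontB p (backB vm.1 vm.2)) (Fin.last (n+1))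
        then Real.exp (-θ * (kendall (n+2) (frontB p (backB vm.1 vm.2)) 1 : ℝ)) else 0)
      _ (fun vm => rfl)]
  rw [Fintype.sum_prod_type, Finset.sum_mul]
  apply Finset.sum_congr rfl; intro v _
  rw [ZP, Finset.mul_sum]
  apply Finset.sum_congr rfl; intro μ _
  rw [frontB_zero, ← last_eq_succ_last, frontB_succ, backB_last, inv_frontB, inv_backB]
  by_cases h : (p:ℕ) ≤ (v:ℕ)
  · rw [if_pos, if_pos h, ← Real.exp_add]
    · congr 1
      rw [EE]
      push_cast [Nat.cast_sub (Fin.is_le v)]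
      ring
    · rw [Fin.lt_succAbove_iff_le_castSucc]
      simpa [Fin.le_iff_val_le_val] using h
  · rw [if_neg, if_neg h, zero_mul]
    intro hh
    rw [Fin.lt_succAbove_iff_le_castSucc] at hh
    exact h (by simpa [Fin.le_iff_val_le_val] using hh)

lemma W_ext_B (θ : ℝ) : W (n+2) θ (Fin.last (n+1)) 0 = SB n θ * ZP n θ := by
  rw [W, ← Fintype.sum_bijective _ frontB_bij
      (fun pt : Fin (n+2) × Equiv.Perm (Fin (n+1)) =>
        if (frontB pt.1 pt.2) (Fin.last (n+1)) < (frontB pt.1 pt.2) 0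
        then Real.exp (-θ * (kendall (n+2) (frontB pt.1 pt.2) 1 : ℝ)) else 0)
      _ (fun pt => rfl)]
  rw [Fintype.sum_prod_type, SB, Fintype.sum_prod_type, Finset.sum_mul]
  apply Finset.sum_congr rfl; intro p _
  rw [← Fintype.sum_bijective _ backB_bij
      (fun vm : Fin (n+1) × Equiv.Perm (Fin n) =>
        if (frontB p (backB vm.1 vm.2)) (Fin.last (n+1)) < (frontB p (backB vm.1 vm.2)) 0
        then Real.exp (-θ * (kendall (n+2) (frontB p (backB vm.1 vm.2)) 1 : ℝ)) else 0)
      _ (fun vm => rfl)]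
  rw [Fintype.sum_prod_type, Finset.sum_mul]
  apply Finset.sum_congr rfl; intro v _
  rw [ZP, Finset.mul_sum]
  apply Finset.sum_congr rfl; intro μ _
  rw [frontB_zero, ← last_eq_succ_last, frontB_succ, backB_last, inv_frontB, inv_backB]
  by_cases h : (v:ℕ) < (p:ℕ)
  · rw [if_pos, if_pos h, ← Real.exp_add]
    · congr 1
      rw [EE]
      push_cast [Nat.cast_sub (Fin.is_le v)]
      ring
    · rw [Fin.succAbove_lt_iff_castSucc_lt]
      simpa [Fin.lt_iff_val_lt_val] using h
  · rw [if_neg, if_neg h, zero_mul]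
    intro hh
    rw [Fin.succAbove_lt_iff_castSucc_lt] at hh
    exact h (by simpa [Fin.lt_iff_val_lt_val] using hh)

lemma exp_cross {s t a b : ℝ} (hts : t ≤ s) (hab : a ≤ b) :
    Real.exp (-s*b) * Real.exp (-t*a) ≤ Real.exp (-s*a) * Real.exp (-t*b) := by
  rw [← Real.exp_add, ← Real.exp_add]
  apply Real.exp_le_exp.mpr
  nlinarith [mul_nonneg (sub_nonneg.mpr hts) (sub_nonneg.mpr hab)]

lemma EE_le (x : Fin (n+2) × Fin (n+1)) (h : (x.1:ℕ) ≤ (x.2:ℕ)) : EE n x ≤ (n:ℝ) := by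
  rw [EE]
  have : ((x.1:ℕ):ℝ) ≤ ((x.2:ℕ):ℝ) := by exact_mod_cast h
  linarith

lemma SB_eq (θ : ℝ) : SB n θ = ∑ x : Fin (n+2) × Fin (n+1),
    if (x.1:ℕ) ≤ (x.2:ℕ) then Real.exp (-θ * ((2*(n:ℝ)+1) - EE n x)) else 0 := by
  rw [SB, ← Equiv.sum_comp
    (Equiv.prodCongr (Fin.revPerm : Equiv.Perm (Fin (n+2))) (Fin.revPerm : Equiv.Perm (Fin (n+1))))
    (fun x : Fin (n+2) × Fin (n+1) =>
      if (x.2:ℕ) < (x.1:ℕ) then Real.exp (-θ * EE n x) else 0)]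
  apply Finset.sum_congr rfl
  rintro ⟨p, v⟩ _
  simp only [Equiv.prodCongr_apply, Prod.map, Fin.revPerm_apply]
  have hp2 : (p:ℕ) < n+2 := p.isLt
  have hv2 : (v:ℕ) < n+1 := v.isLt
  have hp : ((p.rev : ℕ)) = n+1-(p:ℕ) := by rw [Fin.val_rev]; omega
  have hv : ((v.rev : ℕ)) = n-(v:ℕ) := by rw [Fin.val_rev]; omega
  by_cases h : (p:ℕ) ≤ (v:ℕ)
  · rw [if_pos (by omega : (v.rev:ℕ) < (p.rev:ℕ)), if_pos h]
    congr 1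
    rw [EE, EE, hp, hv, Nat.cast_sub (by omega), Nat.cast_sub (by omega)]
    push_cast
    ring
  · rw [if_neg (by omega : ¬ (v.rev:ℕ) < (p.rev:ℕ)), if_neg h]

lemma SB_le_SA (θ : ℝ) (hθ : 0 ≤ θ) : SB n θ ≤ SA n θ := by
  rw [SB_eq, SA]
  apply Finset.sum_le_sum; intro x _
  by_cases h : (x.1:ℕ) ≤ (x.2:ℕ)
  · rw [if_pos h, if_pos h]
    apply Real.exp_le_exp.mpr
    have hE := EE_le x h
    nlinarith [mul_nonneg hθ (by linarith : (0:ℝ) ≤ 2*(n:ℝ)+1 - 2 * EE n x)]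
  · rw [if_neg h, if_neg h]

lemma SA_SB_cross {s t : ℝ} (ht : 0 ≤ t) (hts : t ≤ s) :
    SB n s * SA n t ≤ SA n s * SB n t := by
  have hkey : ∀ x y : Fin (n+2) × Fin (n+1),
      0 ≤ ((if (x.1:ℕ) ≤ (x.2:ℕ) then Real.exp (-s * EE n x) else 0) *
            (if (y.1:ℕ) ≤ (y.2:ℕ) then Real.exp (-t * ((2*(n:ℝ)+1) - EE n y)) else 0)
          - (if (x.1:ℕ) ≤ (x.2:ℕ) then Real.exp (-s * ((2*(n:ℝ)+1) - EE n x)) else 0) *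
            (if (y.1:ℕ) ≤ (y.2:ℕ) then Real.exp (-t * EE n y) else 0))
          + ((if (y.1:ℕ) ≤ (y.2:ℕ) then Real.exp (-s * EE n y) else 0) *
            (if (x.1:ℕ) ≤ (x.2:ℕ) then Real.exp (-t * ((2*(n:ℝ)+1) - EE n x)) else 0)
          - (if (y.1:ℕ) ≤ (y.2:ℕ) then Real.exp (-s * ((2*(n:ℝ)+1) - EE n y)) else 0) *
            (if (x.1:ℕ) ≤ (x.2:ℕ) then Real.exp (-t * EE n x) else 0)) := by
    intro x y
    by_cases hx : (x.1:ℕ) ≤ (x.2:ℕ)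
    · by_cases hy : (y.1:ℕ) ≤ (y.2:ℕ)
      · rw [if_pos hx, if_pos hy, if_pos hx, if_pos hy, if_pos hx, if_pos hy, if_pos hx, if_pos hy]
        have hEx := EE_le x hx
        have hEy := EE_le y hy
        have h1 : Real.exp (-s * ((2*(n:ℝ)+1) - EE n y)) * Real.exp (-t * EE n x)
            ≤ Real.exp (-s * EE n x) * Real.exp (-t * ((2*(n:ℝ)+1) - EE n y)) :=
          exp_cross hts (by linarith)
        have h2 : Real.exp (-s * ((2*(n:ℝ)+1) - EE n x)) * Real.exp (-t * EE n y)
            ≤ Real.exp (-s * EE n y) * Real.exp (-t * ((2*(n:ℝ)+1) - EE n x)) :=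
          exp_cross hts (by linarith)
        linarith
      · rw [if_neg hy, if_neg hy, if_neg hy]
        simp [hy]
    · rw [if_neg hx, if_neg hx, if_neg hx]
      simp [hx]
  have hsum : 0 ≤ ∑ x : Fin (n+2) × Fin (n+1), ∑ y : Fin (n+2) × Fin (n+1),
      (((if (x.1:ℕ) ≤ (x.2:ℕ) then Real.exp (-s * EE n x) else 0) *
            (if (y.1:ℕ) ≤ (y.2:ℕ) then Real.exp (-t * ((2*(n:ℝ)+1) - EE n y)) else 0)
          - (if (x.1:ℕ) ≤ (x.2:ℕ) then Real.exp (-s * ((2*(n:ℝ)+1) - EE n x)) else 0) *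
            (if (y.1:ℕ) ≤ (y.2:ℕ) then Real.exp (-t * EE n y) else 0))
          + ((if (y.1:ℕ) ≤ (y.2:ℕ) then Real.exp (-s * EE n y) else 0) *
            (if (x.1:ℕ) ≤ (x.2:ℕ) then Real.exp (-t * ((2*(n:ℝ)+1) - EE n x)) else 0)
          - (if (y.1:ℕ) ≤ (y.2:ℕ) then Real.exp (-s * ((2*(n:ℝ)+1) - EE n y)) else 0) *
            (if (x.1:ℕ) ≤ (x.2:ℕ) then Real.exp (-t * EE n x) else 0))) :=
    Finset.sum_nonneg (fun x _ => Finset.sum_nonneg (fun y _ => hkey x y))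
  have expand : ∑ x : Fin (n+2) × Fin (n+1), ∑ y : Fin (n+2) × Fin (n+1),
      (((if (x.1:ℕ) ≤ (x.2:ℕ) then Real.exp (-s * EE n x) else 0) *
            (if (y.1:ℕ) ≤ (y.2:ℕ) then Real.exp (-t * ((2*(n:ℝ)+1) - EE n y)) else 0)
          - (if (x.1:ℕ) ≤ (x.2:ℕ) then Real.exp (-s * ((2*(n:ℝ)+1) - EE n x)) else 0) *
            (if (y.1:ℕ) ≤ (y.2:ℕ) then Real.exp (-t * EE n y) else 0))
          + ((if (y.1:ℕ) ≤ (y.2:ℕ) then Real.exp (-s * EE n y) else 0) *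
            (if (x.1:ℕ) ≤ (x.2:ℕ) then Real.exp (-t * ((2*(n:ℝ)+1) - EE n x)) else 0)
          - (if (y.1:ℕ) ≤ (y.2:ℕ) then Real.exp (-s * ((2*(n:ℝ)+1) - EE n y)) else 0) *
            (if (x.1:ℕ) ≤ (x.2:ℕ) then Real.exp (-t * EE n x) else 0)))
      = 2 * (SA n s * SB n t - SB n s * SA n t) := by
    simp only [Finset.sum_add_distrib, Finset.sum_sub_distrib, ← Finset.sum_mul, ← Finset.mul_sum]
    rw [SA, SB_eq, SA, SB_eq]
    ring
  rw [expand] at hsum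
  linarith

theorem key : ∀ (n : ℕ) (s t : ℝ), 0 < t → t ≤ s → ∀ i j : Fin n, (i:ℕ) < (j:ℕ) →
    W n t j i ≤ W n t i j ∧ W n s j i * W n t i j ≤ W n s i j * W n t j i := by
  intro n
  induction n with
  | zero => intro _ _ _ _ i; exact i.elim0
  | succ m ih =>
    intro s t ht hts i j hij
    by_cases hj : (j:ℕ) < m
    · -- back peel
      have him : (i:ℕ) < m := lt_trans hij hj
      have hi : i = (⟨(i:ℕ), him⟩ : Fin m).castSucc := by apply Fin.ext; simp
      have hjc : j = (⟨(j:ℕ), hj⟩ : Fin m).castSucc := by apply Fin.ext; simp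
      obtain ⟨h1, h2⟩ := ih s t ht hts ⟨(i:ℕ), him⟩ ⟨(j:ℕ), hj⟩ hij
      have hGs : 0 ≤ ∑ w : Fin (m+1), Real.exp (-s * ((m:ℝ) - ((w:ℕ):ℝ))) :=
        Finset.sum_nonneg fun _ _ => (Real.exp_pos _).le
      have hGt : 0 ≤ ∑ w : Fin (m+1), Real.exp (-t * ((m:ℝ) - ((w:ℕ):ℝ))) :=
        Finset.sum_nonneg fun _ _ => (Real.exp_pos _).le
      rw [hi, hjc, W_back, W_back, W_back, W_back]
      constructor
      · exact mul_le_mul_of_nonneg_left h1 hGt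
      · calc (∑ w : Fin (m+1), Real.exp (-s * ((m:ℝ) - ((w:ℕ):ℝ)))) * W m s ⟨(j:ℕ), hj⟩ ⟨(i:ℕ), him⟩ *
              ((∑ w : Fin (m+1), Real.exp (-t * ((m:ℝ) - ((w:ℕ):ℝ)))) * W m t ⟨(i:ℕ), him⟩ ⟨(j:ℕ), hj⟩)
            = ((∑ w : Fin (m+1), Real.exp (-s * ((m:ℝ) - ((w:ℕ):ℝ)))) *
               (∑ w : Fin (m+1), Real.exp (-t * ((m:ℝ) - ((w:ℕ):ℝ))))) *
              (W m s ⟨(j:ℕ), hj⟩ ⟨(i:ℕ), him⟩ * W m t ⟨(i:ℕ), him⟩ ⟨(j:ℕ), hj⟩) := by ring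
          _ ≤ ((∑ w : Fin (m+1), Real.exp (-s * ((m:ℝ) - ((w:ℕ):ℝ)))) *
               (∑ w : Fin (m+1), Real.exp (-t * ((m:ℝ) - ((w:ℕ):ℝ))))) *
              (W m s ⟨(i:ℕ), him⟩ ⟨(j:ℕ), hj⟩ * W m t ⟨(j:ℕ), hj⟩ ⟨(i:ℕ), him⟩) :=
            mul_le_mul_of_nonneg_left h2 (mul_nonneg hGs hGt)
          _ = (∑ w : Fin (m+1), Real.exp (-s * ((m:ℝ) - ((w:ℕ):ℝ)))) * W m s ⟨(i:ℕ), him⟩ ⟨(j:ℕ), hj⟩ *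
              ((∑ w : Fin (m+1), Real.exp (-t * ((m:ℝ) - ((w:ℕ):ℝ)))) * W m t ⟨(j:ℕ), hj⟩ ⟨(i:ℕ), him⟩) := by ring
    · have hjm : (j:ℕ) = m := by have := j.isLt; omega
      by_cases hi0 : (i:ℕ) = 0
      · -- extreme pair
        obtain ⟨m', rfl⟩ : ∃ m', m = m'+1 := ⟨m-1, by omega⟩
        have hi : i = 0 := by apply Fin.ext; simpa using hi0
        have hjl : j = Fin.last (m'+1) := by apply Fin.ext; simpa using hjm
        rw [hi, hjl, W_ext_A, W_ext_B, W_ext_A, W_ext_B]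
        constructor
        · exact mul_le_mul_of_nonneg_right (SB_le_SA t ht.le) (ZP_nonneg t)
        · calc SB m' s * ZP m' s * (SA m' t * ZP m' t)
              = (SB m' s * SA m' t) * (ZP m' s * ZP m' t) := by ring
            _ ≤ (SA m' s * SB m' t) * (ZP m' s * ZP m' t) :=
              mul_le_mul_of_nonneg_right (SA_SB_cross ht.le hts)
                (mul_nonneg (ZP_nonneg s) (ZP_nonneg t))
            _ = SA m' s * ZP m' s * (SB m' t * ZP m' t) := by ring
      · -- front peel
        obtain ⟨m', rfl⟩ : ∃ m', m = m'+1 := ⟨m-1, by omega⟩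
        have hi0lt : (i:ℕ) - 1 < m'+1 := by omega
        have hi : i = (⟨(i:ℕ)-1, hi0lt⟩ : Fin (m'+1)).succ := by
          apply Fin.ext; simp [Fin.val_succ]; omega
        have hjl : j = (Fin.last m').succ := by
          apply Fin.ext; simp [Fin.val_succ]; omega
        obtain ⟨h1, h2⟩ := ih s t ht hts ⟨(i:ℕ)-1, hi0lt⟩ (Fin.last m')
          (by simp [Fin.val_last]; omega)
        have hGs : 0 ≤ ∑ p : Fin (m'+2), Real.exp (-s * ((p:ℕ):ℝ)) :=
          Finset.sum_nonneg fun _ _ => (Real.exp_pos _).le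
        have hGt : 0 ≤ ∑ p : Fin (m'+2), Real.exp (-t * ((p:ℕ):ℝ)) :=
          Finset.sum_nonneg fun _ _ => (Real.exp_pos _).le
        rw [hi, hjl, W_front, W_front, W_front, W_front]
        constructor
        · exact mul_le_mul_of_nonneg_left h1 hGt
        · calc (∑ p : Fin (m'+2), Real.exp (-s * ((p:ℕ):ℝ))) * W (m'+1) s (Fin.last m') ⟨(i:ℕ)-1, hi0lt⟩ *
                ((∑ p : Fin (m'+2), Real.exp (-t * ((p:ℕ):ℝ))) * W (m'+1) t ⟨(i:ℕ)-1, hi0lt⟩ (Fin.last m'))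
              = ((∑ p : Fin (m'+2), Real.exp (-s * ((p:ℕ):ℝ))) * (∑ p : Fin (m'+2), Real.exp (-t * ((p:ℕ):ℝ)))) *
                (W (m'+1) s (Fin.last m') ⟨(i:ℕ)-1, hi0lt⟩ * W (m'+1) t ⟨(i:ℕ)-1, hi0lt⟩ (Fin.last m')) := by ring
            _ ≤ ((∑ p : Fin (m'+2), Real.exp (-s * ((p:ℕ):ℝ))) * (∑ p : Fin (m'+2), Real.exp (-t * ((p:ℕ):ℝ)))) *
                (W (m'+1) s ⟨(i:ℕ)-1, hi0lt⟩ (Fin.last m') * W (m'+1) t (Fin.last m') ⟨(i:ℕ)-1, hi0lt⟩) :=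
              mul_le_mul_of_nonneg_left h2 (mul_nonneg hGs hGt)
            _ = (∑ p : Fin (m'+2), Real.exp (-s * ((p:ℕ):ℝ))) * W (m'+1) s ⟨(i:ℕ)-1, hi0lt⟩ (Fin.last m') *
                ((∑ p : Fin (m'+2), Real.exp (-t * ((p:ℕ):ℝ))) * W (m'+1) t (Fin.last m') ⟨(i:ℕ)-1, hi0lt⟩) := by ring

noncomputable def indR (σ π : Equiv.Perm (Fin n)) (q : Fin n × Fin n) : ℝ :=
  if q.1 < q.2 ∧ ((σ q.1 < σ q.2 ∧ π q.2 < π q.1) ∨ (σ q.2 < σ q.1 ∧ π q.1 < π q.2)) then 1 else 0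

lemma indR_nonneg (σ π : Equiv.Perm (Fin n)) (q) : 0 ≤ indR σ π q := by
  rw [indR]; split <;> norm_num

lemma kendall_cast (σ π : Equiv.Perm (Fin n)) :
    ((kendall n σ π : ℕ) : ℝ) = ∑ q : Fin n × Fin n, indR σ π q := by
  rw [kendall_eq_sum]
  simp only [Nat.cast_sum, Nat.cast_ite, Nat.cast_one, Nat.cast_zero, indR]

noncomputable def Zc (n : ℕ) (θ : ℝ) (σ₀ : Equiv.Perm (Fin n)) : ℝ :=
  ∑ σ : Equiv.Perm (Fin n), Real.exp (-θ * (kendall n σ σ₀ : ℝ))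

lemma Zc_pos (θ : ℝ) (σ₀ : Equiv.Perm (Fin n)) : 0 < Zc n θ σ₀ :=
  Finset.sum_pos (fun σ _ => Real.exp_pos _) Finset.univ_nonempty

noncomputable def NUM (n : ℕ) (θ : ℝ) (σ₀ : Equiv.Perm (Fin n)) (q : Fin n × Fin n) : ℝ :=
  ∑ σ : Equiv.Perm (Fin n), indR σ σ₀ q * Real.exp (-θ * (kendall n σ σ₀ : ℝ))

lemma NUM_nonneg (θ : ℝ) (σ₀ : Equiv.Perm (Fin n)) (q) : 0 ≤ NUM n θ σ₀ q :=
  Finset.sum_nonneg fun σ _ => mul_nonneg (indR_nonneg σ σ₀ q) (Real.exp_pos _).le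

lemma Zc_eq_ZP (θ : ℝ) (σ₀ : Equiv.Perm (Fin n)) : Zc n θ σ₀ = ZP n θ := by
  rw [Zc, ZP, ← Equiv.sum_comp (Equiv.mulRight σ₀)
    (fun σ : Equiv.Perm (Fin n) => Real.exp (-θ * (kendall n σ σ₀ : ℝ)))]
  apply Finset.sum_congr rfl; intro ρ _
  rw [Equiv.coe_mulRight, kendall_mul_right]

lemma ZP_eq_add (θ : ℝ) (u v : Fin n) (huv : u ≠ v) : ZP n θ = W n θ u v + W n θ v u := by
  rw [ZP, W, W, ← Finset.sum_add_distrib]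
  apply Finset.sum_congr rfl; intro σ _
  have : σ u ≠ σ v := fun h => huv (σ.injective h)
  rcases this.lt_or_gt with h | h
  · rw [if_pos h, if_neg (asymm h), add_zero]
  · rw [if_neg (asymm h), if_pos h, zero_add]

lemma NUM_eq_W (θ : ℝ) (σ₀ : Equiv.Perm (Fin n)) (q : Fin n × Fin n) (hq : q.1 < q.2) :
    NUM n θ σ₀ q = if σ₀ q.1 < σ₀ q.2 then W n θ (σ₀ q.2) (σ₀ q.1) else W n θ (σ₀ q.1) (σ₀ q.2) := by
  have huv : σ₀ q.1 ≠ σ₀ q.2 := fun h => hq.ne (σ₀.injective h)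
  rw [NUM, ← Equiv.sum_comp (Equiv.mulRight σ₀)
    (fun σ : Equiv.Perm (Fin n) => indR σ σ₀ q * Real.exp (-θ * (kendall n σ σ₀ : ℝ)))]
  rcases huv.lt_or_gt with h | h
  · rw [if_pos h, W]
    apply Finset.sum_congr rfl; intro ρ _
    simp only [Equiv.coe_mulRight, kendall_mul_right, indR, Equiv.Perm.mul_apply]
    by_cases hd : ρ (σ₀ q.2) < ρ (σ₀ q.1)
    · exact (congrArg (· * _) (if_pos (And.intro hq (Or.inr (And.intro hd h))))).trans ((one_mul _).trans (if_pos hd).symm)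
    · refine (mul_eq_zero_of_left (if_neg ?_) _).trans (if_neg hd).symm
      rintro ⟨-, ⟨-, h2⟩ | ⟨h1, -⟩⟩
      · exact absurd h (asymm h2)
      · exact hd h1
  · rw [if_neg (asymm h), W]
    apply Finset.sum_congr rfl; intro ρ _
    simp only [Equiv.coe_mulRight, kendall_mul_right, indR, Equiv.Perm.mul_apply]
    by_cases hd : ρ (σ₀ q.1) < ρ (σ₀ q.2)
    · exact (congrArg (· * _) (if_pos (And.intro hq (Or.inl (And.intro hd h))))).trans ((one_mul _).trans (if_pos hd).symm)
    · refine (mul_eq_zero_of_left (if_neg ?_) _).trans (if_neg hd).symm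
      rintro ⟨-, ⟨h1, -⟩ | ⟨-, h2⟩⟩
      · exact hd h1
      · exact absurd h (asymm h2)

lemma NUM_le_half (θ : ℝ) (hθ : 0 < θ) (σ₀ : Equiv.Perm (Fin n)) (q : Fin n × Fin n)
    (hq : q.1 < q.2) : 2 * NUM n θ σ₀ q ≤ Zc n θ σ₀ := by
  have huv : σ₀ q.1 ≠ σ₀ q.2 := fun h => hq.ne (σ₀.injective h)
  rw [NUM_eq_W θ σ₀ q hq, Zc_eq_ZP]
  rcases huv.lt_or_gt with h | h
  · rw [if_pos h, ZP_eq_add θ (σ₀ q.1) (σ₀ q.2) huv]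
    have := (key n θ θ hθ le_rfl (σ₀ q.1) (σ₀ q.2) (by exact_mod_cast h)).1
    linarith
  · rw [if_neg (asymm h), ZP_eq_add θ (σ₀ q.2) (σ₀ q.1) huv.symm]
    have := (key n θ θ hθ le_rfl (σ₀ q.2) (σ₀ q.1) (by exact_mod_cast h)).1
    linarith

lemma NUM_cross (s t : ℝ) (ht : 0 < t) (hts : t ≤ s) (σ₀ : Equiv.Perm (Fin n))
    (q : Fin n × Fin n) (hq : q.1 < q.2) :
    NUM n s σ₀ q * Zc n t σ₀ ≤ NUM n t σ₀ q * Zc n s σ₀ := by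
  have huv : σ₀ q.1 ≠ σ₀ q.2 := fun h => hq.ne (σ₀.injective h)
  rw [NUM_eq_W s σ₀ q hq, NUM_eq_W t σ₀ q hq, Zc_eq_ZP, Zc_eq_ZP]
  rcases huv.lt_or_gt with h | h
  · rw [if_pos h, if_pos h, ZP_eq_add t (σ₀ q.1) (σ₀ q.2) huv, ZP_eq_add s (σ₀ q.1) (σ₀ q.2) huv]
    have h2 := (key n s t ht hts (σ₀ q.1) (σ₀ q.2) (by exact_mod_cast h)).2
    nlinarith [W_nonneg t (σ₀ q.2) (σ₀ q.1), W_nonneg s (σ₀ q.2) (σ₀ q.1)]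
  · rw [if_neg (asymm h), if_neg (asymm h), ZP_eq_add t (σ₀ q.2) (σ₀ q.1) huv.symm,
      ZP_eq_add s (σ₀ q.2) (σ₀ q.1) huv.symm]
    have h2 := (key n s t ht hts (σ₀ q.2) (σ₀ q.1) (by exact_mod_cast h)).2
    nlinarith [W_nonneg t (σ₀ q.1) (σ₀ q.2), W_nonneg s (σ₀ q.1) (σ₀ q.2)]

lemma mallows_eq (θ : ℝ) (σ₀ σ : Equiv.Perm (Fin n)) :
    mallows n θ σ₀ σ = Real.exp (-θ * (kendall n σ σ₀ : ℝ)) / Zc n θ σ₀ := rfl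

lemma sum_mallows (θ : ℝ) (σ₀ : Equiv.Perm (Fin n)) :
    ∑ σ : Equiv.Perm (Fin n), mallows n θ σ₀ σ = 1 := by
  simp only [mallows_eq]
  rw [← Finset.sum_div]
  have h : ∑ σ : Equiv.Perm (Fin n), Real.exp (-θ * (kendall n σ σ₀ : ℝ)) = Zc n θ σ₀ := rfl
  rw [h, div_self (Zc_pos θ σ₀).ne']

lemma inner_dd (θ : ℝ) (σ₀ : Equiv.Perm (Fin n)) (q : Fin n × Fin n) :
    ∑ σ : Equiv.Perm (Fin n), mallows n θ σ₀ σ * indR σ σ₀ q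
      = NUM n θ σ₀ q / Zc n θ σ₀ := by
  simp only [mallows_eq]
  rw [NUM, Finset.sum_div]
  apply Finset.sum_congr rfl; intro σ _
  ring

lemma indR_fact (σ σ' σ₀ : Equiv.Perm (Fin n)) (q : Fin n × Fin n) (hq : q.1 < q.2) :
    indR σ σ' q = indR σ σ₀ q + indR σ' σ₀ q - 2 * (indR σ σ₀ q * indR σ' σ₀ q) := by
  have e1 : σ q.1 ≠ σ q.2 := fun h => hq.ne (σ.injective h)
  have e2 : σ' q.1 ≠ σ' q.2 := fun h => hq.ne (σ'.injective h)
  have e3 : σ₀ q.1 ≠ σ₀ q.2 := fun h => hq.ne (σ₀.injective h)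
  have h1 := e1.lt_or_gt
  have h2 := e2.lt_or_gt
  have h3 := e3.lt_or_gt
  rcases h1 with h1 | h1 <;> rcases h2 with h2 | h2 <;> rcases h3 with h3 | h3 <;>
    simp [indR, hq, h1, h2, h3, asymm h1, asymm h2, asymm h3] <;> ring

lemma E_expand (θ : ℝ) (σ₀ : Equiv.Perm (Fin n)) :
    ∑ σ : Equiv.Perm (Fin n), mallows n θ σ₀ σ * ((kendall n σ σ₀ : ℕ) : ℝ)
      = ∑ q : Fin n × Fin n, NUM n θ σ₀ q / Zc n θ σ₀ := by
  calc ∑ σ : Equiv.Perm (Fin n), mallows n θ σ₀ σ * ((kendall n σ σ₀ : ℕ) : ℝ)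
      = ∑ σ : Equiv.Perm (Fin n), ∑ q : Fin n × Fin n, mallows n θ σ₀ σ * indR σ σ₀ q := by
        apply Finset.sum_congr rfl; intro σ _
        rw [kendall_cast, Finset.mul_sum]
    _ = ∑ q : Fin n × Fin n, ∑ σ : Equiv.Perm (Fin n), mallows n θ σ₀ σ * indR σ σ₀ q :=
        Finset.sum_comm
    _ = ∑ q : Fin n × Fin n, NUM n θ σ₀ q / Zc n θ σ₀ := by
        apply Finset.sum_congr rfl; intro q _
        exact inner_dd θ σ₀ q

lemma mean_expand (θg θb r θ : ℝ) (σ₀ : Equiv.Perm (Fin n)) :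
    meanDistMix n θg θb r θ σ₀
      = ∑ q : Fin n × Fin n, ∑ σ : Equiv.Perm (Fin n), ∑ σ' : Equiv.Perm (Fin n),
          mallows n θ σ₀ σ *
            ((r * mallows n θg σ₀ σ' + (1-r) * mallows n θb σ₀ σ') * indR σ σ' q) := by
  rw [meanDistMix]
  calc ∑ σ : Equiv.Perm (Fin n), mallows n θ σ₀ σ *
          ∑ σ' : Equiv.Perm (Fin n),
            (r * mallows n θg σ₀ σ' + (1 - r) * mallows n θb σ₀ σ') * ((kendall n σ σ' : ℕ) : ℝ)
      = ∑ σ : Equiv.Perm (Fin n), ∑ σ' : Equiv.Perm (Fin n), ∑ q : Fin n × Fin n,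
          mallows n θ σ₀ σ *
            ((r * mallows n θg σ₀ σ' + (1-r) * mallows n θb σ₀ σ') * indR σ σ' q) := by
        apply Finset.sum_congr rfl; intro σ _
        rw [Finset.mul_sum]
        apply Finset.sum_congr rfl; intro σ' _
        rw [kendall_cast, Finset.mul_sum, Finset.mul_sum]
    _ = ∑ σ : Equiv.Perm (Fin n), ∑ q : Fin n × Fin n, ∑ σ' : Equiv.Perm (Fin n),
          mallows n θ σ₀ σ *
            ((r * mallows n θg σ₀ σ' + (1-r) * mallows n θb σ₀ σ') * indR σ σ' q) := by
        apply Finset.sum_congr rfl; intro σ _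
        exact Finset.sum_comm
    _ = ∑ q : Fin n × Fin n, ∑ σ : Equiv.Perm (Fin n), ∑ σ' : Equiv.Perm (Fin n),
          mallows n θ σ₀ σ *
            ((r * mallows n θg σ₀ σ' + (1-r) * mallows n θb σ₀ σ') * indR σ σ' q) :=
        Finset.sum_comm

lemma MM_formula (θg θb r θ : ℝ) (σ₀ : Equiv.Perm (Fin n)) (q : Fin n × Fin n)
    (hq : q.1 < q.2) :
    ∑ σ : Equiv.Perm (Fin n), ∑ σ' : Equiv.Perm (Fin n),
        mallows n θ σ₀ σ *
          ((r * mallows n θg σ₀ σ' + (1-r) * mallows n θb σ₀ σ') * indR σ σ' q)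
      = NUM n θ σ₀ q / Zc n θ σ₀
        + (r * (NUM n θg σ₀ q / Zc n θg σ₀) + (1-r) * (NUM n θb σ₀ q / Zc n θb σ₀))
        - 2 * (NUM n θ σ₀ q / Zc n θ σ₀)
            * (r * (NUM n θg σ₀ q / Zc n θg σ₀) + (1-r) * (NUM n θb σ₀ q / Zc n θb σ₀)) := by
  have hmix1 : ∑ σ' : Equiv.Perm (Fin n),
      (r * mallows n θg σ₀ σ' + (1-r) * mallows n θb σ₀ σ') = 1 := by
    rw [Finset.sum_add_distrib, ← Finset.mul_sum, ← Finset.mul_sum,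
      sum_mallows, sum_mallows]
    ring
  have hmixd : ∑ σ' : Equiv.Perm (Fin n),
      (r * mallows n θg σ₀ σ' + (1-r) * mallows n θb σ₀ σ') * indR σ' σ₀ q
      = r * (NUM n θg σ₀ q / Zc n θg σ₀) + (1-r) * (NUM n θb σ₀ q / Zc n θb σ₀) := by
    rw [← inner_dd θg σ₀ q, ← inner_dd θb σ₀ q, Finset.mul_sum, Finset.mul_sum,
      ← Finset.sum_add_distrib]
    apply Finset.sum_congr rfl; intro σ' _
    ring
  have hrow : ∀ σ : Equiv.Perm (Fin n),
      ∑ σ' : Equiv.Perm (Fin n), mallows n θ σ₀ σ *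
          ((r * mallows n θg σ₀ σ' + (1-r) * mallows n θb σ₀ σ') * indR σ σ' q)
      = mallows n θ σ₀ σ * (indR σ σ₀ q
          + (r * (NUM n θg σ₀ q / Zc n θg σ₀) + (1-r) * (NUM n θb σ₀ q / Zc n θb σ₀))
          - 2 * indR σ σ₀ q
              * (r * (NUM n θg σ₀ q / Zc n θg σ₀) + (1-r) * (NUM n θb σ₀ q / Zc n θb σ₀))) := by
    intro σ
    rw [← Finset.mul_sum]
    congr 1
    calc ∑ σ' : Equiv.Perm (Fin n),
          (r * mallows n θg σ₀ σ' + (1-r) * mallows n θb σ₀ σ') * indR σ σ' q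
        = ∑ σ' : Equiv.Perm (Fin n),
            (indR σ σ₀ q * (r * mallows n θg σ₀ σ' + (1-r) * mallows n θb σ₀ σ')
             + ((r * mallows n θg σ₀ σ' + (1-r) * mallows n θb σ₀ σ') * indR σ' σ₀ q
             - 2 * indR σ σ₀ q *
                ((r * mallows n θg σ₀ σ' + (1-r) * mallows n θb σ₀ σ') * indR σ' σ₀ q))) := by
          apply Finset.sum_congr rfl; intro σ' _
          rw [indR_fact σ σ' σ₀ q hq]
          ring
      _ = indR σ σ₀ q * 1
          + ((r * (NUM n θg σ₀ q / Zc n θg σ₀) + (1-r) * (NUM n θb σ₀ q / Zc n θb σ₀))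
          - 2 * indR σ σ₀ q
             * (r * (NUM n θg σ₀ q / Zc n θg σ₀) + (1-r) * (NUM n θb σ₀ q / Zc n θb σ₀))) := by
          rw [Finset.sum_add_distrib, Finset.sum_sub_distrib, ← Finset.mul_sum, ← Finset.mul_sum,
            hmix1, hmixd]
      _ = indR σ σ₀ q
          + (r * (NUM n θg σ₀ q / Zc n θg σ₀) + (1-r) * (NUM n θb σ₀ q / Zc n θb σ₀))
          - 2 * indR σ σ₀ q
             * (r * (NUM n θg σ₀ q / Zc n θg σ₀) + (1-r) * (NUM n θb σ₀ q / Zc n θb σ₀)) := by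
          ring
  calc ∑ σ : Equiv.Perm (Fin n), ∑ σ' : Equiv.Perm (Fin n),
        mallows n θ σ₀ σ *
          ((r * mallows n θg σ₀ σ' + (1-r) * mallows n θb σ₀ σ') * indR σ σ' q)
      = ∑ σ : Equiv.Perm (Fin n), (mallows n θ σ₀ σ * indR σ σ₀ q
          + mallows n θ σ₀ σ
            * (r * (NUM n θg σ₀ q / Zc n θg σ₀) + (1-r) * (NUM n θb σ₀ q / Zc n θb σ₀))
          - 2 * (r * (NUM n θg σ₀ q / Zc n θg σ₀) + (1-r) * (NUM n θb σ₀ q / Zc n θb σ₀))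
              * (mallows n θ σ₀ σ * indR σ σ₀ q)) := by
        apply Finset.sum_congr rfl; intro σ _
        rw [hrow σ]
        ring
    _ = NUM n θ σ₀ q / Zc n θ σ₀
        + 1 * (r * (NUM n θg σ₀ q / Zc n θg σ₀) + (1-r) * (NUM n θb σ₀ q / Zc n θb σ₀))
        - 2 * (r * (NUM n θg σ₀ q / Zc n θg σ₀) + (1-r) * (NUM n θb σ₀ q / Zc n θb σ₀))
            * (NUM n θ σ₀ q / Zc n θ σ₀) := by
        rw [Finset.sum_sub_distrib, Finset.sum_add_distrib, ← Finset.mul_sum, ← Finset.sum_mul,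
          inner_dd, sum_mallows]
    _ = _ := by ring

lemma NUM_zero (θ : ℝ) (σ₀ : Equiv.Perm (Fin n)) (q : Fin n × Fin n) (hq : ¬ q.1 < q.2) :
    NUM n θ σ₀ q = 0 := by
  rw [NUM]
  apply Finset.sum_eq_zero; intro σ _
  rw [indR, if_neg (fun h => hq h.1), zero_mul]

lemma MM_zero (θg θb r θ : ℝ) (σ₀ : Equiv.Perm (Fin n)) (q : Fin n × Fin n)
    (hq : ¬ q.1 < q.2) :
    ∑ σ : Equiv.Perm (Fin n), ∑ σ' : Equiv.Perm (Fin n),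
        mallows n θ σ₀ σ *
          ((r * mallows n θg σ₀ σ' + (1-r) * mallows n θb σ₀ σ') * indR σ σ' q) = 0 := by
  apply Finset.sum_eq_zero; intro σ _
  apply Finset.sum_eq_zero; intro σ' _
  rw [indR, if_neg (fun h => hq h.1), mul_zero, mul_zero]

end MMS

/-- Separation of the expected mean distances of the two components of a concentric
Mallows mixture: if `E[d(β,σ₀)] ≥ c·E[d(γ,σ₀)]` with `c ≥ 2`, then
`E[δ_β] − E[δ_γ] ≥ (c−2)·r·E[d(γ,σ₀)]`. -/
theorem mixture_mean_distance_separation (n : ℕ) (θg θb r c : ℝ) (hb : 0 < θb)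
    (hbg : θb < θg) (hr0 : 0 ≤ r) (hr1 : r ≤ 1) (hc : 2 ≤ c)
    (σ₀ : Equiv.Perm (Fin n))
    (hsep : (∑ β : Equiv.Perm (Fin n), mallows n θb σ₀ β * kendall n β σ₀) ≥
      c * ∑ γ : Equiv.Perm (Fin n), mallows n θg σ₀ γ * kendall n γ σ₀) :
    meanDistMix n θg θb r θb σ₀ - meanDistMix n θg θb r θg σ₀ ≥
      (c - 2) * r * ∑ γ : Equiv.Perm (Fin n), mallows n θg σ₀ γ * kendall n γ σ₀ := by
  open MMS in
  rw [MMS.E_expand θg σ₀] at hsep ⊢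
  rw [MMS.E_expand θb σ₀] at hsep
  rw [MMS.mean_expand θg θb r θb σ₀, MMS.mean_expand θg θb r θg σ₀, ← Finset.sum_sub_distrib]
  have step1 : ∀ q ∈ (Finset.univ : Finset (Fin n × Fin n)),
      r * (MMS.NUM n θb σ₀ q / MMS.Zc n θb σ₀ - 2 * (MMS.NUM n θg σ₀ q / MMS.Zc n θg σ₀)) ≤
      (∑ σ : Equiv.Perm (Fin n), ∑ σ' : Equiv.Perm (Fin n),
        mallows n θb σ₀ σ *
          ((r * mallows n θg σ₀ σ' + (1-r) * mallows n θb σ₀ σ') * MMS.indR σ σ' q))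
      - (∑ σ : Equiv.Perm (Fin n), ∑ σ' : Equiv.Perm (Fin n),
        mallows n θg σ₀ σ *
          ((r * mallows n θg σ₀ σ' + (1-r) * mallows n θb σ₀ σ') * MMS.indR σ σ' q)) := by
    intro q _
    by_cases hq : q.1 < q.2
    · rw [MMS.MM_formula θg θb r θb σ₀ q hq, MMS.MM_formula θg θb r θg σ₀ q hq]
      set γq := MMS.NUM n θg σ₀ q / MMS.Zc n θg σ₀ with hγq
      set β := MMS.NUM n θb σ₀ q / MMS.Zc n θb σ₀ with hβ
      have h0g : 0 ≤ γq :=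
        div_nonneg (MMS.NUM_nonneg θg σ₀ q) (MMS.Zc_pos θg σ₀).le
      have hhalf : β ≤ 1/2 := by
        rw [hβ, div_le_iff₀ (MMS.Zc_pos θb σ₀)]
        have := MMS.NUM_le_half θb hb σ₀ q hq
        linarith
      have hmono : γq ≤ β := by
        rw [hγq, hβ, div_le_div_iff₀ (MMS.Zc_pos θg σ₀) (MMS.Zc_pos θb σ₀)]
        exact MMS.NUM_cross θg θb hb hbg.le σ₀ q hq
      nlinarith [mul_nonneg (mul_nonneg (sub_nonneg.2 hr1)
          (by linarith : (0:ℝ) ≤ 1 - 2*β)) (sub_nonneg.2 hmono),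
        mul_nonneg (mul_nonneg hr0 h0g) (by linarith : (0:ℝ) ≤ 1 + 2*γq - 2*β)]
    · rw [MMS.MM_zero θg θb r θb σ₀ q hq, MMS.MM_zero θg θb r θg σ₀ q hq,
        MMS.NUM_zero θb σ₀ q hq, MMS.NUM_zero θg σ₀ q hq]
      simp
  have step2 := Finset.sum_le_sum step1
  have step3 : ∑ q : Fin n × Fin n,
      r * (MMS.NUM n θb σ₀ q / MMS.Zc n θb σ₀ - 2 * (MMS.NUM n θg σ₀ q / MMS.Zc n θg σ₀))
      = r * ((∑ q : Fin n × Fin n, MMS.NUM n θb σ₀ q / MMS.Zc n θb σ₀)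
        - 2 * (∑ q : Fin n × Fin n, MMS.NUM n θg σ₀ q / MMS.Zc n θg σ₀)) := by
    rw [← Finset.mul_sum, Finset.sum_sub_distrib, ← Finset.mul_sum]
  rw [step3] at step2
  have hfin := mul_le_mul_of_nonneg_left hsep hr0
  nlinarith [step2, hfin]
end

section
/- Under a Mallows model M(e, θ) with θ > 0 on S_n, for any items i < i', the probability that item i appears in the top-k positions is at least the probability that item i' does: P(σ(i) ≤ k) ≥ P(σ(i') ≤ k). -/
open Finset

lemma kendall_one_eq (n : ℕ) (σ : Equiv.Perm (Fin n)) :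
    kendall n σ 1 = (Finset.univ.filter (fun p : Fin n × Fin n =>
      p.1 < p.2 ∧ σ p.2 < σ p.1)).card := by
  unfold kendall
  congr 1
  apply Finset.filter_congr
  intro p _
  simp only [Equiv.Perm.one_apply]
  constructor
  · rintro ⟨h1, h2 | h2⟩
    · exact absurd h1 (not_lt.2 h2.2.le)
    · exact ⟨h1, h2.1⟩
  · rintro ⟨h1, h2⟩
    exact ⟨h1, Or.inr ⟨h2, h1⟩⟩

lemma kendall_swap_le (n : ℕ) (σ : Equiv.Perm (Fin n)) (i i' : Fin n)
    (h : i < i') (hσ : σ i < σ i') :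
    kendall n σ 1 ≤ kendall n (σ * Equiv.swap i i') 1 := by
  set s := Equiv.swap i i' with hs
  rw [kendall_one_eq, kendall_one_eq]
  apply Finset.card_le_card_of_injOn
    (fun p => if s p.1 < s p.2 then (s p.1, s p.2) else p)
  · intro p hp
    simp only [Finset.mem_coe, Finset.mem_filter, Finset.mem_univ, true_and] at hp ⊢
    obtain ⟨hab, hinv⟩ := hp
    by_cases hlt : s p.1 < s p.2
    · rw [if_pos hlt]
      refine ⟨hlt, ?_⟩
      have e1 : (σ * s) (s p.1) = σ p.1 := by
        simp [Equiv.Perm.mul_apply, hs]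
      have e2 : (σ * s) (s p.2) = σ p.2 := by
        simp [Equiv.Perm.mul_apply, hs]
      rw [e1, e2]; exact hinv
    · rw [if_neg hlt]
      refine ⟨hab, ?_⟩
      simp only [Equiv.Perm.mul_apply]
      -- case analysis
      by_cases ha : p.1 = i
      · by_cases hb : p.2 = i'
        · exact absurd hinv (by rw [ha, hb]; exact not_lt.2 hσ.le)
        · have hbi : p.2 ≠ i := by
            intro hh; rw [ha, hh] at hab; exact lt_irrefl _ hab
          have e1 : s p.1 = i' := by rw [ha, hs]; exact Equiv.swap_apply_left i i'
          have e2 : s p.2 = p.2 := by rw [hs]; exact Equiv.swap_apply_of_ne_of_ne hbi hb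
          rw [e1, e2]
          rw [ha] at hinv
          exact hinv.trans hσ
      · by_cases hb : p.2 = i'
        · have hai' : p.1 ≠ i' := by
            intro hh; rw [hh, hb] at hab; exact lt_irrefl _ hab
          have e1 : s p.1 = p.1 := by rw [hs]; exact Equiv.swap_apply_of_ne_of_ne ha hai'
          have e2 : s p.2 = i := by rw [hb, hs]; exact Equiv.swap_apply_right i i'
          rw [e1, e2]
          rw [hb] at hinv
          exact hσ.trans hinv
        · exfalso
          apply hlt
          by_cases ha' : p.1 = i'
          · have hb2 : p.2 ≠ i := by
              intro hh; rw [ha', hh] at hab; exact absurd (h.trans hab) (lt_irrefl _)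
            have e1 : s p.1 = i := by rw [ha', hs]; exact Equiv.swap_apply_right i i'
            have e2 : s p.2 = p.2 := by
              rw [hs]; exact Equiv.swap_apply_of_ne_of_ne hb2 hb
            rw [e1, e2]
            rw [ha'] at hab
            exact h.trans hab
          · by_cases hb' : p.2 = i
            · have e1 : s p.1 = p.1 := by rw [hs]; exact Equiv.swap_apply_of_ne_of_ne ha ha'
              have e2 : s p.2 = i' := by rw [hb', hs]; exact Equiv.swap_apply_left i i'
              rw [e1, e2]
              rw [hb'] at hab
              exact hab.trans h
            · have e1 : s p.1 = p.1 := by rw [hs]; exact Equiv.swap_apply_of_ne_of_ne ha ha'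
              have e2 : s p.2 = p.2 := by rw [hs]; exact Equiv.swap_apply_of_ne_of_ne hb' hb
              rw [e1, e2]; exact hab
  · intro p hp q hq hfq
    simp only [Finset.mem_coe, Finset.mem_filter, Finset.mem_univ, true_and] at hp hq
    by_cases h1 : s p.1 < s p.2 <;> by_cases h2 : s q.1 < s q.2 <;>
      simp only [h1, h2, if_true, if_false] at hfq
    · have := Prod.ext_iff.1 hfq
      exact Prod.ext (s.injective this.1) (s.injective this.2)
    · exfalso
      have := Prod.ext_iff.1 hfq
      apply h2
      rw [← this.1, ← this.2]
      simpa [hs] using hp.1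
    · exfalso
      have := Prod.ext_iff.1 hfq
      apply h1
      rw [this.1, this.2]
      simpa [hs] using hq.1
    · exact hfq

lemma mallows_mono (n : ℕ) (θ : ℝ) (hθ : 0 < θ) (σ τ : Equiv.Perm (Fin n))
    (h : kendall n σ 1 ≤ kendall n τ 1) :
    mallows n θ 1 τ ≤ mallows n θ 1 σ := by
  unfold mallows
  have hden : 0 < ∑ π : Equiv.Perm (Fin n), Real.exp (-θ * kendall n π 1) :=
    Finset.sum_pos (fun π _ => Real.exp_pos _) Finset.univ_nonempty
  have hc : (kendall n σ 1 : ℝ) ≤ (kendall n τ 1 : ℝ) := by exact_mod_cast h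
  have hnum : Real.exp (-θ * kendall n τ 1) ≤ Real.exp (-θ * kendall n σ 1) := by
    apply Real.exp_le_exp.2
    nlinarith
  exact div_le_div_of_nonneg_right hnum hden.le

/-- Under `M(e,θ)`, smaller-indexed items are more likely to appear in the top-`k`:
for items `i < i'`, `P(σ(i) ≤ k) ≥ P(σ(i') ≤ k)` (ranks are 0-indexed here, so
"rank ≤ k" reads `(σ i).val < k`). -/
theorem topk_probability_monotone (n : ℕ) (θ : ℝ) (hθ : 0 < θ) (k : ℕ) (hk : k ≤ n)
    (i i' : Fin n) (hii' : i < i') :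
    ∑ σ ∈ Finset.univ.filter (fun σ : Equiv.Perm (Fin n) => ((σ i') : ℕ) < k),
        mallows n θ 1 σ ≤
      ∑ σ ∈ Finset.univ.filter (fun σ : Equiv.Perm (Fin n) => ((σ i) : ℕ) < k),
        mallows n θ 1 σ := by
  classical
  set s := Equiv.swap i i' with hs
  have hsi : s i = i' := Equiv.swap_apply_left i i'
  have hsi' : s i' = i := Equiv.swap_apply_right i i'
  have split : ∀ (P Q : Equiv.Perm (Fin n) → Prop) [DecidablePred P] [DecidablePred Q],
      ∑ σ ∈ Finset.univ.filter (fun σ => P σ), mallows n θ 1 σ =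
      (∑ σ ∈ Finset.univ.filter (fun σ => P σ ∧ Q σ), mallows n θ 1 σ) +
      ∑ σ ∈ Finset.univ.filter (fun σ => P σ ∧ ¬ Q σ), mallows n θ 1 σ := by
    intro P Q _ _
    rw [← Finset.sum_filter_add_sum_filter_not (Finset.univ.filter (fun σ => P σ)) Q]
    rw [Finset.filter_filter, Finset.filter_filter]
  rw [split (fun σ => ((σ i') : ℕ) < k) (fun σ => ((σ i) : ℕ) < k),
      split (fun σ => ((σ i) : ℕ) < k) (fun σ => ((σ i') : ℕ) < k)]
  gcongr ?_ + ?_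
  · apply le_of_eq
    congr 1
    apply Finset.filter_congr
    intro σ _
    simp [and_comm]
  · have reindex :
        ∑ σ ∈ Finset.univ.filter
          (fun σ : Equiv.Perm (Fin n) => ((σ i') : ℕ) < k ∧ ¬ ((σ i) : ℕ) < k),
          mallows n θ 1 σ =
        ∑ τ ∈ Finset.univ.filter
          (fun τ : Equiv.Perm (Fin n) => ((τ i) : ℕ) < k ∧ ¬ ((τ i') : ℕ) < k),
          mallows n θ 1 (τ * s) := by
      apply Finset.sum_nbij' (fun σ => σ * s) (fun τ => τ * s)
      · intro σ hσ
        simp only [Finset.mem_filter, Finset.mem_univ, true_and] at hσ ⊢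
        simpa [Equiv.Perm.mul_apply, hsi, hsi'] using hσ
      · intro τ hτ
        simp only [Finset.mem_filter, Finset.mem_univ, true_and] at hτ ⊢
        simpa [Equiv.Perm.mul_apply, hsi, hsi'] using hτ
      · intro σ _
        simp [mul_assoc, hs, Equiv.swap_mul_self]
      · intro τ _
        simp [mul_assoc, hs, Equiv.swap_mul_self]
      · intro σ _
        simp [mul_assoc, hs, Equiv.swap_mul_self]
    rw [reindex]
    apply Finset.sum_le_sum
    intro τ hτ
    simp only [Finset.mem_filter, Finset.mem_univ, true_and, not_lt] at hτ
    apply mallows_mono n θ hθ τ (τ * s)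
    apply kendall_swap_le n τ i i' hii'
    have : ((τ i) : ℕ) < ((τ i') : ℕ) := lt_of_lt_of_le hτ.1 hτ.2
    exact this
end
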